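/- arXiv:2507.20602 — 7 statements merged into one kernel-verified Lean document; each statement's English description precedes it below -/
import Mathlib

section
/- Let 0 < α ≤ 1 and let u : (0,∞) → ℝ be measurable with u(t) ≥ 0 for all t > 0. Assume there is a constant K > 0 such that ∫₀^∞ e^{-st} u(t) dt ≥ K s^{-α} for all s ∈ (0,1]. Then for every ε > 0 with α + ε ≤ 1, ∫₀^∞ u(t) t^{-α-ε} dt ≥ K / (ε · Γ(α+ε)), where Γ denotes the Gamma function. -/
open MeasureTheory Real Set

/-- Gamma-type integral: `∫₀^∞ s^{γ-1} e^{-st} ds = t^{-γ} Γ(γ)` for `t > 0`, in lintegral form. -/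
lemma aux_gamma_lint {γ t : ℝ} (hγ : 0 < γ) (ht : 0 < t) :
    ∫⁻ s in Set.Ioi (0:ℝ), ENNReal.ofReal (s ^ (γ - 1) * Real.exp (-(s * t)))
      = ENNReal.ofReal (t ^ (-γ)) * ENNReal.ofReal (Real.Gamma γ) := by
  have hint : IntegrableOn (fun s : ℝ => s ^ (γ - 1) * Real.exp (-(s * t))) (Set.Ioi 0) := by
    have h := integrableOn_rpow_mul_exp_neg_mul_rpow (p := 1) (s := γ - 1) (b := t)
      (by linarith) zero_lt_one ht
    refine h.congr_fun (fun s _ => ?_) measurableSet_Ioi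
    simp [Real.rpow_one, neg_mul, mul_comm]
  have hnn : 0 ≤ᵐ[volume.restrict (Set.Ioi (0:ℝ))]
      fun s : ℝ => s ^ (γ - 1) * Real.exp (-(s * t)) := by
    refine (ae_restrict_iff' measurableSet_Ioi).mpr (.of_forall fun s hs => ?_)
    have : (0:ℝ) < s := hs
    positivity
  rw [← MeasureTheory.ofReal_integral_eq_lintegral_ofReal hint hnn]
  have heq : ∫ s in Set.Ioi (0:ℝ), s ^ (γ - 1) * Real.exp (-(s * t))
      = (1 / t) ^ γ * Real.Gamma γ := by
    rw [← integral_rpow_mul_exp_neg_mul_Ioi hγ ht]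
    exact setIntegral_congr_fun measurableSet_Ioi fun s _ => by rw [mul_comm s t]
  rw [heq, ENNReal.ofReal_mul (by positivity), one_div, Real.inv_rpow ht.le,
    ← Real.rpow_neg ht.le]

/-- If `0 < α ≤ 1`, `u ≥ 0` on `(0,∞)` is measurable and its Laplace
transform satisfies `û(s) ≥ K s^{-α}` for `s ∈ (0,1]`, then for every `ε > 0` with
`α + ε ≤ 1`, `∫₀^∞ u(t) t^{-α-ε} dt ≥ K / (ε Γ(α+ε))`. -/
theorem stmt_1 (α : ℝ) (hα0 : 0 < α) (hα1 : α ≤ 1)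
    (u : ℝ → ℝ) (hum : Measurable u) (hupos : ∀ t > (0:ℝ), 0 ≤ u t)
    (K : ℝ) (hK : 0 < K)
    (hLap : ∀ s ∈ Set.Ioc (0:ℝ) 1,
      ENNReal.ofReal (K * s ^ (-α))
        ≤ ∫⁻ t in Set.Ioi (0:ℝ), ENNReal.ofReal (Real.exp (-(s * t)) * u t)) :
    ∀ ε > (0:ℝ), α + ε ≤ 1 →
      ENNReal.ofReal (K / (ε * Real.Gamma (α + ε)))
        ≤ ∫⁻ t in Set.Ioi (0:ℝ), ENNReal.ofReal (u t * t ^ (-α - ε)) := by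
  intro ε hε hαε
  set γ : ℝ := α + ε with hγdef
  have hγ0 : 0 < γ := by positivity
  have hΓ : 0 < Real.Gamma γ := Real.Gamma_pos_of_pos hγ0
  set I := ∫⁻ t in Set.Ioi (0:ℝ), ENNReal.ofReal (u t * t ^ (-α - ε)) with hIdef
  have hexp : ∀ t : ℝ, t ^ (-α - ε) = t ^ (-γ) := by
    intro t; congr 1; rw [hγdef]; ring
  have key : ENNReal.ofReal (K / ε) ≤ I * ENNReal.ofReal (Real.Gamma γ) := by
    have step1 : I * ENNReal.ofReal (Real.Gamma γ)
        = ∫⁻ t in Set.Ioi (0:ℝ), ∫⁻ s in Set.Ioi (0:ℝ),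
            ENNReal.ofReal (u t) * ENNReal.ofReal (s ^ (γ - 1) * Real.exp (-(s * t))) := by
      rw [hIdef, ← lintegral_mul_const' _ _ ENNReal.ofReal_ne_top]
      refine setLIntegral_congr_fun measurableSet_Ioi (fun t ht => ?_)
      rw [hexp t, ENNReal.ofReal_mul (hupos t ht), mul_assoc, ← aux_gamma_lint hγ0 ht,
        lintegral_const_mul' _ _ ENNReal.ofReal_ne_top]
    have step2 : (∫⁻ t in Set.Ioi (0:ℝ), ∫⁻ s in Set.Ioi (0:ℝ),
            ENNReal.ofReal (u t) * ENNReal.ofReal (s ^ (γ - 1) * Real.exp (-(s * t))))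
        = ∫⁻ s in Set.Ioi (0:ℝ), ∫⁻ t in Set.Ioi (0:ℝ),
            ENNReal.ofReal (u t) * ENNReal.ofReal (s ^ (γ - 1) * Real.exp (-(s * t))) := by
      refine lintegral_lintegral_swap ?_
      apply Measurable.aemeasurable
      have h1 : Measurable fun p : ℝ × ℝ => ENNReal.ofReal (u p.1) := by fun_prop
      have h2 : Measurable fun p : ℝ × ℝ =>
          ENNReal.ofReal (p.2 ^ (γ - 1) * Real.exp (-(p.2 * p.1))) := by fun_prop
      exact h1.mul h2
    have step3 : (∫⁻ s in Set.Ioi (0:ℝ), ∫⁻ t in Set.Ioi (0:ℝ),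
            ENNReal.ofReal (u t) * ENNReal.ofReal (s ^ (γ - 1) * Real.exp (-(s * t))))
        = ∫⁻ s in Set.Ioi (0:ℝ), ENNReal.ofReal (s ^ (γ - 1)) *
            ∫⁻ t in Set.Ioi (0:ℝ), ENNReal.ofReal (Real.exp (-(s * t)) * u t) := by
      refine setLIntegral_congr_fun measurableSet_Ioi (fun s hs => ?_)
      rw [← lintegral_const_mul' _ _ ENNReal.ofReal_ne_top]
      refine setLIntegral_congr_fun measurableSet_Ioi (fun t ht => ?_)
      have hs0 : (0:ℝ) < s := hs
      rw [ENNReal.ofReal_mul (by positivity), ENNReal.ofReal_mul (Real.exp_nonneg _)]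
      ring
    have step4 : (∫⁻ s in Set.Ioc (0:ℝ) 1, ENNReal.ofReal (K * s ^ (ε - 1)))
        ≤ ∫⁻ s in Set.Ioi (0:ℝ), ENNReal.ofReal (s ^ (γ - 1)) *
            ∫⁻ t in Set.Ioi (0:ℝ), ENNReal.ofReal (Real.exp (-(s * t)) * u t) := by
      refine le_trans ?_ (lintegral_mono_set (Set.Ioc_subset_Ioi_self : Set.Ioc (0:ℝ) 1 ⊆ _))
      refine setLIntegral_mono_ae ?_ ?_
      · refine Measurable.aemeasurable (Measurable.mul (by fun_prop) ?_)
        apply Measurable.lintegral_prod_right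
        fun_prop
      · refine .of_forall fun s hs => ?_
        have hs0 : (0:ℝ) < s := hs.1
        have h1 : ENNReal.ofReal (K * s ^ (ε - 1))
            = ENNReal.ofReal (s ^ (γ - 1)) * ENNReal.ofReal (K * s ^ (-α)) := by
          rw [← ENNReal.ofReal_mul (by positivity)]
          congr 1
          rw [show s ^ (γ - 1) * (K * s ^ (-α)) = K * (s ^ (γ - 1) * s ^ (-α)) by ring,
            ← Real.rpow_add hs0]
          congr 2
          rw [hγdef]; ring
        rw [h1]
        exact mul_le_mul_right (hLap s hs) _
    have step5 : (∫⁻ s in Set.Ioc (0:ℝ) 1, ENNReal.ofReal (K * s ^ (ε - 1)))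
        = ENNReal.ofReal (K / ε) := by
      have hint : IntegrableOn (fun s : ℝ => K * s ^ (ε - 1)) (Set.Ioc 0 1) :=
        ((intervalIntegral.intervalIntegrable_rpow' (by linarith)).1).const_mul K
      have hnn : 0 ≤ᵐ[volume.restrict (Set.Ioc (0:ℝ) 1)] fun s : ℝ => K * s ^ (ε - 1) := by
        refine (ae_restrict_iff' measurableSet_Ioc).mpr (.of_forall fun s hs => ?_)
        have : (0:ℝ) < s := hs.1
        positivity
      rw [← MeasureTheory.ofReal_integral_eq_lintegral_ofReal hint hnn]
      congr 1
      rw [← intervalIntegral.integral_of_le zero_le_one, intervalIntegral.integral_const_mul,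
        integral_rpow (Or.inl (by linarith))]
      rw [show ε - 1 + 1 = ε by ring, Real.one_rpow, Real.zero_rpow hε.ne']
      field_simp
      norm_num
    calc ENNReal.ofReal (K / ε) = _ := step5.symm
      _ ≤ _ := step4
      _ = _ := step3.symm
      _ = _ := step2.symm
      _ = _ := step1.symm
  have hd : ENNReal.ofReal (K / ε) / ENNReal.ofReal (Real.Gamma γ) ≤ I := by
    rw [ENNReal.div_le_iff_le_mul (Or.inl (by simpa using hΓ)) (Or.inl ENNReal.ofReal_ne_top)]
    exact key
  calc ENNReal.ofReal (K / (ε * Real.Gamma γ))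
      = ENNReal.ofReal (K / ε) / ENNReal.ofReal (Real.Gamma γ) := by
        rw [← ENNReal.ofReal_div_of_pos hΓ, div_div]
    _ ≤ I := hd
end

section
/- Let 0 < α < 1, let u⁰ ∈ L¹(0,∞) be nonnegative with M = ∫₀^∞ u⁰(a) da, and let U : (0,∞) → [0,∞) be locally integrable and satisfy, for all t > 0, ∫₀^t U(τ) (1+t-τ)^{-α} dτ = M − ∫₀^∞ u⁰(a) ((1+a)/(1+t+a))^α da. Then for every δ ∈ (0,1), ∫₁^∞ t^{-α-δ} U(t) dt ≤ (1+α) M / δ. -/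
open MeasureTheory Real Set

/-- Under the renewal integral equation for `U` with nonnegative
`u⁰ ∈ L¹(0,∞)` and mass `M`, for every `δ ∈ (0,1)`,
`∫₁^∞ t^{-α-δ} U(t) dt ≤ (1+α) M / δ`. -/
theorem stmt_7 (α : ℝ) (hα : α ∈ Set.Ioo (0:ℝ) 1)
    (u0 : ℝ → ℝ) (hu0int : IntegrableOn u0 (Set.Ioi 0))
    (hu0pos : ∀ a > (0:ℝ), 0 ≤ u0 a)
    (M : ℝ) (hM : M = ∫ a in Set.Ioi (0:ℝ), u0 a)
    (U : ℝ → ℝ) (hUpos : ∀ t > (0:ℝ), 0 ≤ U t)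
    (hUloc : ∀ t > (0:ℝ), IntegrableOn U (Set.Ioc 0 t))
    (heq : ∀ t > (0:ℝ),
      (∫ τ in Set.Ioc (0:ℝ) t, U τ * (1 + t - τ) ^ (-α))
        = M - ∫ a in Set.Ioi (0:ℝ), u0 a * ((1 + a) / (1 + t + a)) ^ α) :
    ∀ δ ∈ Set.Ioo (0:ℝ) 1,
      (∫⁻ t in Set.Ioi (1:ℝ), ENNReal.ofReal (t ^ (-α - δ) * U t))
        ≤ ENNReal.ofReal ((1 + α) * M / δ) := by
  obtain ⟨hα0, hα1⟩ := hα
  rintro δ ⟨hδ0, hδ1⟩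
  set β := α + δ with hβ
  have hβ0 : 0 < β := by positivity
  have hM0 : 0 ≤ M := by
    rw [hM]
    exact setIntegral_nonneg measurableSet_Ioi fun a ha => hu0pos a ha
  -- Key a priori bound: for `s > 1`, `∫_{(1,s]} U ≤ M s^α`.
  have key : ∀ s : ℝ, 1 < s → (∫ t in Ioc (1:ℝ) s, U t) ≤ M * s ^ α := by
    intro s hs
    have hs0 : (0:ℝ) < s := lt_trans one_pos hs
    have hint : IntegrableOn (fun τ => U τ * (1 + s - τ) ^ (-α)) (Ioc 0 s) := by
      apply Integrable.mono' (hUloc s hs0)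
      · apply AEStronglyMeasurable.mul (hUloc s hs0).aestronglyMeasurable
        apply ContinuousOn.aestronglyMeasurable ?_ measurableSet_Ioc
        apply ContinuousOn.rpow_const (by fun_prop)
        intro τ hτ
        exact Or.inl (by simp only [mem_Ioc] at hτ; nlinarith [hτ.2])
      · filter_upwards [ae_restrict_mem measurableSet_Ioc] with τ hτ
        have h1 : 0 ≤ U τ := hUpos τ hτ.1
        have h2 : (0:ℝ) ≤ (1 + s - τ) ^ (-α) := rpow_nonneg (by linarith [hτ.2]) _
        have h3 : (1 + s - τ) ^ (-α) ≤ 1 :=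
          rpow_le_one_of_one_le_of_nonpos (by linarith [hτ.2]) (by linarith)
        rw [Real.norm_eq_abs, abs_of_nonneg (mul_nonneg h1 h2)]
        nlinarith
    have hJ : 0 ≤ ∫ a in Ioi (0:ℝ), u0 a * ((1 + a) / (1 + s + a)) ^ α := by
      apply setIntegral_nonneg measurableSet_Ioi
      intro a ha
      have ha' : (0:ℝ) < a := ha
      exact mul_nonneg (hu0pos a ha')
        (rpow_nonneg (div_nonneg (by linarith) (by linarith)) _)
    have h1 : (∫ τ in Ioc (0:ℝ) s, U τ * (1 + s - τ) ^ (-α)) ≤ M := by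
      rw [heq s hs0]; linarith
    have h2 : (∫ τ in Ioc (1:ℝ) s, U τ * (1 + s - τ) ^ (-α))
        ≤ ∫ τ in Ioc (0:ℝ) s, U τ * (1 + s - τ) ^ (-α) := by
      apply setIntegral_mono_set hint
      · filter_upwards [ae_restrict_mem measurableSet_Ioc] with τ hτ
        exact mul_nonneg (hUpos τ hτ.1) (rpow_nonneg (by linarith [hτ.2]) _)
      · exact HasSubset.Subset.eventuallyLE (Ioc_subset_Ioc_left zero_le_one)
    have h3 : s ^ (-α) * (∫ t in Ioc (1:ℝ) s, U t)
        ≤ ∫ τ in Ioc (1:ℝ) s, U τ * (1 + s - τ) ^ (-α) := by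
      rw [← integral_const_mul]
      apply setIntegral_mono_on
      · exact ((hUloc s hs0).mono_set (Ioc_subset_Ioc_left zero_le_one)).const_mul _
      · exact hint.mono_set (Ioc_subset_Ioc_left zero_le_one)
      · exact measurableSet_Ioc
      · intro τ hτ
        have h1τ : (1:ℝ) < τ := hτ.1
        have hτs : τ ≤ s := hτ.2
        have hle : s ^ (-α) ≤ (1 + s - τ) ^ (-α) :=
          Real.rpow_le_rpow_of_nonpos (by linarith) (by linarith) (by linarith)
        calc s ^ (-α) * U τ ≤ (1 + s - τ) ^ (-α) * U τ :=
              mul_le_mul_of_nonneg_right hle (hUpos τ (by linarith))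
          _ = U τ * (1 + s - τ) ^ (-α) := mul_comm _ _
    have h4 : s ^ α * (s ^ (-α) * ∫ t in Ioc (1:ℝ) s, U t) = ∫ t in Ioc (1:ℝ) s, U t := by
      rw [← mul_assoc, ← Real.rpow_add hs0]; norm_num
    calc (∫ t in Ioc (1:ℝ) s, U t)
        = s ^ α * (s ^ (-α) * ∫ t in Ioc (1:ℝ) s, U t) := h4.symm
      _ ≤ s ^ α * M :=
          mul_le_mul_of_nonneg_left (le_trans h3 (h2.trans h1)) (rpow_nonneg hs0.le _)
      _ = M * s ^ α := mul_comm _ _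
  -- A measurable representative of `U` on `(1,∞)`.
  have hUmeas : AEStronglyMeasurable U (volume.restrict (Ioi (1:ℝ))) := by
    have hUn : AEStronglyMeasurable U (volume.restrict (⋃ n : ℕ, Ioc (0:ℝ) (n+1))) :=
      aestronglyMeasurable_iUnion_iff.mpr fun n =>
        (hUloc (n+1) (by positivity)).aestronglyMeasurable
    apply hUn.mono_measure (Measure.restrict_mono ?_ le_rfl)
    intro x hx
    obtain ⟨n, hn⟩ := exists_nat_ge x
    have hx1 : (1:ℝ) < x := hx
    exact mem_iUnion.mpr ⟨n, ⟨by linarith, by push_cast; linarith⟩⟩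
  set g := hUmeas.mk U with hg
  have hgmeas : StronglyMeasurable g := hUmeas.stronglyMeasurable_mk
  have hUg : U =ᵐ[volume.restrict (Ioi 1)] g := hUmeas.ae_eq_mk
  set F : ℝ → ENNReal := fun s => ENNReal.ofReal (s ^ (-1 - β)) with hFdef
  -- Representation of `t^{-β}` as an integral.
  have hF : ∀ t : ℝ, 0 < t →
      ENNReal.ofReal (t ^ (-β)) = ENNReal.ofReal β * ∫⁻ s in Ioi t, F s := by
    intro t ht
    have hlt : (-1 - β) < -1 := by linarith
    have hintF := integrableOn_Ioi_rpow_of_lt hlt ht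
    rw [hFdef]
    rw [← ofReal_integral_eq_lintegral_ofReal hintF ?_]
    · rw [integral_Ioi_rpow_of_lt hlt ht, ← ENNReal.ofReal_mul hβ0.le]
      congr 1
      rw [show (-1 - β) + 1 = -β by ring]
      field_simp
    · filter_upwards [ae_restrict_mem measurableSet_Ioi] with s hs
      exact rpow_nonneg (le_of_lt (lt_trans ht hs)) _
  calc (∫⁻ t in Ioi (1:ℝ), ENNReal.ofReal (t ^ (-α - δ) * U t))
      = ∫⁻ t in Ioi (1:ℝ),
          ENNReal.ofReal β * ∫⁻ s in Ioi (1:ℝ),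
            ((Ioi t).indicator F s * ENNReal.ofReal (g t)) := by
        apply lintegral_congr_ae
        filter_upwards [hUg, ae_restrict_mem measurableSet_Ioi] with t hgt ht
        have ht1 : (1:ℝ) < t := ht
        have ht0 : (0:ℝ) < t := by linarith
        have e1 : (Ioi t : Set ℝ) ∩ Ioi 1 = Ioi t :=
          inter_eq_left.mpr (Ioi_subset_Ioi ht1.le)
        have e2 : (∫⁻ s in Ioi (1:ℝ), (Ioi t).indicator F s) = ∫⁻ s in Ioi t, F s := by
          rw [lintegral_indicator measurableSet_Ioi,
            Measure.restrict_restrict measurableSet_Ioi, e1]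
        rw [show -α - δ = -β by rw [hβ]; ring, ENNReal.ofReal_mul (rpow_nonneg ht0.le _),
          hgt, hF t ht0,
          lintegral_mul_const' (ENNReal.ofReal (g t)) _ ENNReal.ofReal_ne_top, e2,
          mul_assoc]
    _ = ENNReal.ofReal β * ∫⁻ t in Ioi (1:ℝ), ∫⁻ s in Ioi (1:ℝ),
            ((Ioi t).indicator F s * ENNReal.ofReal (g t)) :=
        lintegral_const_mul' _ _ ENNReal.ofReal_ne_top
    _ = ENNReal.ofReal β * ∫⁻ s in Ioi (1:ℝ), ∫⁻ t in Ioi (1:ℝ),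
            ((Ioi t).indicator F s * ENNReal.ofReal (g t)) := by
        congr 1
        apply lintegral_lintegral_swap
        apply Measurable.aemeasurable
        have huncurry : (Function.uncurry fun t s => (Ioi t).indicator F s * ENNReal.ofReal (g t))
            = fun p : ℝ × ℝ =>
              Set.indicator {q : ℝ × ℝ | q.1 < q.2} (fun q => F q.2) p * ENNReal.ofReal (g p.1) := by
          ext ⟨t, s⟩
          simp only [Function.uncurry, Set.indicator, mem_Ioi, mem_setOf_eq]
        rw [huncurry]
        apply Measurable.mul
        · apply Measurable.indicator
          · fun_prop
          · exact measurableSet_lt measurable_fst measurable_snd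
        · exact ENNReal.measurable_ofReal.comp (hgmeas.measurable.comp measurable_fst)
    _ = ENNReal.ofReal β * ∫⁻ s in Ioi (1:ℝ),
            (F s * ∫⁻ t in Ioo (1:ℝ) s, ENNReal.ofReal (g t)) := by
        congr 1
        apply lintegral_congr_ae
        filter_upwards [ae_restrict_mem measurableSet_Ioi] with s hs
        have e1 : ∀ t : ℝ, (Ioi t).indicator F s * ENNReal.ofReal (g t)
            = (Iio s).indicator (fun t => F s * ENNReal.ofReal (g t)) t := by
          intro t
          by_cases h : t < s <;> simp [Set.indicator, mem_Ioi, mem_Iio, h]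
        have e2 : (Iio s : Set ℝ) ∩ Ioi 1 = Ioo 1 s := by
          rw [inter_comm, Ioi_inter_Iio]
        calc (∫⁻ t in Ioi (1:ℝ), (Ioi t).indicator F s * ENNReal.ofReal (g t))
            = ∫⁻ t in Ioi (1:ℝ), (Iio s).indicator (fun t => F s * ENNReal.ofReal (g t)) t :=
              lintegral_congr fun t => e1 t
          _ = ∫⁻ t in Ioo (1:ℝ) s, F s * ENNReal.ofReal (g t) := by
              rw [lintegral_indicator measurableSet_Iio,
                Measure.restrict_restrict measurableSet_Iio, e2]
          _ = F s * ∫⁻ t in Ioo (1:ℝ) s, ENNReal.ofReal (g t) :=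
              lintegral_const_mul' _ _ ENNReal.ofReal_ne_top
    _ ≤ ENNReal.ofReal β * ∫⁻ s in Ioi (1:ℝ), ENNReal.ofReal (M * s ^ (-1 - δ)) := by
        apply mul_le_mul' le_rfl
        apply lintegral_mono_ae
        filter_upwards [ae_restrict_mem measurableSet_Ioi] with s hs
        have hs1 : (1:ℝ) < s := hs
        have hs0 : (0:ℝ) < s := by linarith
        have hIoc : IntegrableOn U (Ioc 1 s) :=
          (hUloc s hs0).mono_set (Ioc_subset_Ioc_left zero_le_one)
        have hUnn : 0 ≤ᵐ[volume.restrict (Ioc (1:ℝ) s)] U := by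
          filter_upwards [ae_restrict_mem measurableSet_Ioc] with t ht
          exact hUpos t (by linarith [ht.1])
        have hgU : (∫⁻ t in Ioc (1:ℝ) s, ENNReal.ofReal (g t))
            = ∫⁻ t in Ioc (1:ℝ) s, ENNReal.ofReal (U t) := by
          apply lintegral_congr_ae
          filter_upwards [ae_restrict_of_ae_restrict_of_subset Ioc_subset_Ioi_self hUg]
            with t ht
          rw [ht]
        have hinner : (∫⁻ t in Ioo (1:ℝ) s, ENNReal.ofReal (g t))
            = ENNReal.ofReal (∫ t in Ioc (1:ℝ) s, U t) := by
          rw [Measure.restrict_congr_set Ioo_ae_eq_Ioc, hgU,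
            ← ofReal_integral_eq_lintegral_ofReal hIoc hUnn]
        rw [hinner]
        calc F s * ENNReal.ofReal (∫ t in Ioc (1:ℝ) s, U t)
            ≤ F s * ENNReal.ofReal (M * s ^ α) :=
              mul_le_mul' le_rfl (ENNReal.ofReal_le_ofReal (key s hs1))
          _ = ENNReal.ofReal (M * s ^ (-1 - δ)) := by
              rw [hFdef, ← ENNReal.ofReal_mul (rpow_nonneg hs0.le _)]
              congr 1
              have e : s ^ (-1 - β) * s ^ α = s ^ (-1 - δ) := by
                rw [← Real.rpow_add hs0]
                congr 1
                rw [hβ]; ring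
              calc s ^ (-1 - β) * (M * s ^ α) = M * (s ^ (-1 - β) * s ^ α) := by ring
                _ = M * s ^ (-1 - δ) := by rw [e]
    _ = ENNReal.ofReal β * ENNReal.ofReal (M * (1 / δ)) := by
        congr 1
        have hlt : (-1 - δ) < -1 := by linarith
        have hintd : IntegrableOn (fun s : ℝ => M * s ^ (-1 - δ)) (Ioi 1) :=
          (integrableOn_Ioi_rpow_of_lt hlt one_pos).const_mul M
        rw [← ofReal_integral_eq_lintegral_ofReal hintd ?_]
        · congr 1
          rw [integral_const_mul, integral_Ioi_rpow_of_lt hlt one_pos,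
            show (-1 - δ) + 1 = -δ by ring, Real.one_rpow]
          field_simp
        · filter_upwards [ae_restrict_mem measurableSet_Ioi] with s hs
          have hs1 : (1:ℝ) < s := hs
          exact mul_nonneg hM0 (rpow_nonneg (by linarith) _)
    _ ≤ ENNReal.ofReal ((1 + α) * M / δ) := by
        rw [← ENNReal.ofReal_mul hβ0.le]
        apply ENNReal.ofReal_le_ofReal
        have hβle : β ≤ 1 + α := by rw [hβ]; linarith
        have : (1 + α) * M / δ = (1 + α) * (M * (1 / δ)) := by ring
        rw [this]
        exact mul_le_mul_of_nonneg_right hβle (by positivity)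
end

section
/- Let 0 < α < 1, let u⁰ ∈ L¹(0,∞) be nonnegative, not almost everywhere zero, with M = ∫₀^∞ u⁰(a) da, and let U : (0,∞) → [0,∞) be locally integrable and satisfy, for all t > 0, ∫₀^t U(τ) (1+t-τ)^{-α} dτ = M − ∫₀^∞ u⁰(a) ((1+a)/(1+t+a))^α da. Then there exists a constant C₋ > 0, depending only on α and u⁰, such that for every δ ∈ (0,1), ∫₀^∞ t^{-α-δ} U(t) dt ≥ C₋ / δ. -/
open MeasureTheory Real Set
open Filter Topology

lemma aux_weight (T δ : ℝ) (hT : 0 < T) (hδ : 0 < δ) :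
    ∫⁻ t in Set.Ioi T, ENNReal.ofReal (t ^ (-1 - δ)) = ENNReal.ofReal (T ^ (-δ) / δ) := by
  have h1 : (-1 - δ) < -1 := by linarith
  have hint := integrableOn_Ioi_rpow_of_lt h1 hT
  rw [← ofReal_integral_eq_lintegral_ofReal hint ?_]
  · rw [integral_Ioi_rpow_of_lt h1 hT]
    have h2 : (-1 - δ) + 1 = -δ := by ring
    rw [h2]
    rw [neg_div, div_neg, neg_neg]
  · filter_upwards [ae_restrict_mem measurableSet_Ioi] with x hx
    exact Real.rpow_nonneg (le_of_lt (hT.trans hx)) _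

lemma aux_kernel (α δ τ : ℝ) (hα0 : 0 < α) (hα1 : α < 1) (hδ : 0 < δ) (hτ : 0 < τ) :
    ∫⁻ t in Set.Ici τ, ENNReal.ofReal (t ^ (-1 - δ) * (1 + t - τ) ^ (-α))
      ≤ ENNReal.ofReal ((1 / (1 - α) + 2 ^ α / α) * τ ^ (-α - δ)) := by
  have h2τ : τ ≤ 2 * τ := by linarith
  have hsplit : Set.Ici τ ⊆ Set.Icc τ (2 * τ) ∪ Set.Ioi (2 * τ) := by
    intro x hx
    rcases le_or_gt x (2 * τ) with h | h
    · exact Or.inl ⟨hx, h⟩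
    · exact Or.inr h
  have hA : ∫⁻ t in Set.Icc τ (2 * τ), ENNReal.ofReal (t ^ (-1 - δ) * (1 + t - τ) ^ (-α))
      ≤ ENNReal.ofReal (τ ^ (-α - δ) / (1 - α)) := by
    rw [setLIntegral_congr (Ioc_ae_eq_Icc (α := ℝ) (a := τ) (b := 2 * τ)).symm]
    have step1 : ∫⁻ t in Set.Ioc τ (2 * τ), ENNReal.ofReal (t ^ (-1 - δ) * (1 + t - τ) ^ (-α))
        ≤ ∫⁻ t in Set.Ioc τ (2 * τ), ENNReal.ofReal (τ ^ (-1 - δ) * (t - τ) ^ (-α)) := by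
      apply setLIntegral_mono' measurableSet_Ioc
      intro t ht
      apply ENNReal.ofReal_le_ofReal
      have h1 : t ^ (-1 - δ) ≤ τ ^ (-1 - δ) :=
        Real.rpow_le_rpow_of_nonpos hτ ht.1.le (by linarith)
      have h2 : (1 + t - τ) ^ (-α) ≤ (t - τ) ^ (-α) :=
        Real.rpow_le_rpow_of_nonpos (by linarith [ht.1]) (by linarith) (by linarith)
      exact mul_le_mul h1 h2 (Real.rpow_nonneg (by linarith [ht.1]) _)
        (Real.rpow_nonneg hτ.le _)
    refine step1.trans ?_
    have hii : IntervalIntegrable (fun x : ℝ => x ^ (-α)) volume 0 τ :=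
      intervalIntegral.intervalIntegrable_rpow' (by linarith)
    have hii2 : IntervalIntegrable (fun x : ℝ => (x - τ) ^ (-α)) volume τ (2 * τ) := by
      have := hii.comp_sub_right τ
      simpa [two_mul] using this
    have hint : IntegrableOn (fun t : ℝ => τ ^ (-1 - δ) * (t - τ) ^ (-α)) (Set.Ioc τ (2 * τ)) := by
      have := (intervalIntegrable_iff_integrableOn_Ioc_of_le h2τ).mp hii2
      exact this.const_mul _
    rw [← ofReal_integral_eq_lintegral_ofReal hint ?_]
    · apply ENNReal.ofReal_le_ofReal
      rw [integral_const_mul]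
      have hval : ∫ t in Set.Ioc τ (2 * τ), (t - τ) ^ (-α) = τ ^ (1 - α) / (1 - α) := by
        rw [← intervalIntegral.integral_of_le h2τ]
        rw [intervalIntegral.integral_comp_sub_right (fun x => x ^ (-α)) τ]
        simp only [sub_self, two_mul, add_sub_cancel_right]
        rw [integral_rpow (Or.inl (by linarith))]
        rw [Real.zero_rpow (by linarith : -α + 1 ≠ 0)]
        rw [show -α + 1 = 1 - α by ring]
        ring
      rw [hval]
      rw [div_eq_mul_inv, ← mul_assoc, ← Real.rpow_add hτ]
      rw [show -1 - δ + (1 - α) = -α - δ by ring]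
      rw [div_eq_mul_inv]
    · filter_upwards [ae_restrict_mem measurableSet_Ioc] with t ht
      exact mul_nonneg (Real.rpow_nonneg hτ.le _) (Real.rpow_nonneg (by linarith [ht.1]) _)
  have hB : ∫⁻ t in Set.Ioi (2 * τ), ENNReal.ofReal (t ^ (-1 - δ) * (1 + t - τ) ^ (-α))
      ≤ ENNReal.ofReal (2 ^ α / α * τ ^ (-α - δ)) := by
    have step1 : ∫⁻ t in Set.Ioi (2 * τ), ENNReal.ofReal (t ^ (-1 - δ) * (1 + t - τ) ^ (-α))
        ≤ ∫⁻ t in Set.Ioi (2 * τ), ENNReal.ofReal (2 ^ α * t ^ (-1 - δ - α)) := by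
      apply setLIntegral_mono' measurableSet_Ioi
      intro t ht
      apply ENNReal.ofReal_le_ofReal
      have ht0 : 0 < t := by simp only [Set.mem_Ioi] at ht; linarith
      simp only [Set.mem_Ioi] at ht
      have h2 : (1 + t - τ) ^ (-α) ≤ (t / 2) ^ (-α) :=
        Real.rpow_le_rpow_of_nonpos (by linarith) (by linarith) (by linarith)
      have h3 : (t / 2) ^ (-α) = 2 ^ α * t ^ (-α) := by
        rw [Real.div_rpow ht0.le (by norm_num), Real.rpow_neg (by norm_num : (0:ℝ) ≤ 2)]
        field_simp
      calc t ^ (-1 - δ) * (1 + t - τ) ^ (-α) ≤ t ^ (-1 - δ) * (t / 2) ^ (-α) := by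
            exact mul_le_mul_of_nonneg_left h2 (Real.rpow_nonneg ht0.le _)
        _ = 2 ^ α * t ^ (-1 - δ - α) := by
            rw [h3, show -1 - δ - α = (-1-δ) + (-α) by ring, Real.rpow_add ht0]
            ring
    refine step1.trans ?_
    have h2τ0 : 0 < 2 * τ := by linarith
    have hexp : (-1 - δ - α) < -1 := by linarith
    have hint : IntegrableOn (fun t : ℝ => 2 ^ α * t ^ (-1 - δ - α)) (Set.Ioi (2 * τ)) :=
      (integrableOn_Ioi_rpow_of_lt hexp h2τ0).const_mul _
    rw [← ofReal_integral_eq_lintegral_ofReal hint ?_]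
    · apply ENNReal.ofReal_le_ofReal
      rw [integral_const_mul, integral_Ioi_rpow_of_lt hexp h2τ0]
      rw [show -1 - δ - α + 1 = -δ - α by ring]
      rw [show (-δ - α) = -(δ + α) by ring, div_neg, neg_div, neg_neg]
      rw [show -(δ + α) = -δ - α by ring]
      have h4 : (2 * τ) ^ (-δ - α) ≤ τ ^ (-δ - α) :=
        Real.rpow_le_rpow_of_nonpos hτ (by linarith) (by linarith)
      have h5 : (2:ℝ) ^ α * ((2 * τ) ^ (-δ - α) / (δ + α)) ≤ 2 ^ α * (τ ^ (-δ - α) / α) := by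
        apply mul_le_mul_of_nonneg_left _ (Real.rpow_nonneg (by norm_num) _)
        apply div_le_div₀ (Real.rpow_nonneg hτ.le _) h4 hα0 (by linarith)
      refine h5.trans (le_of_eq ?_)
      rw [show -δ - α = -α - δ by ring]
      ring
    · filter_upwards [ae_restrict_mem measurableSet_Ioi] with t ht
      simp only [Set.mem_Ioi] at ht
      exact mul_nonneg (Real.rpow_nonneg (by norm_num) _) (Real.rpow_nonneg (by linarith) _)
  calc ∫⁻ t in Set.Ici τ, ENNReal.ofReal (t ^ (-1 - δ) * (1 + t - τ) ^ (-α))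
      ≤ ∫⁻ t in Set.Icc τ (2 * τ) ∪ Set.Ioi (2 * τ),
          ENNReal.ofReal (t ^ (-1 - δ) * (1 + t - τ) ^ (-α)) := lintegral_mono_set hsplit
    _ ≤ _ + _ := lintegral_union_le _ _ _
    _ ≤ ENNReal.ofReal (τ ^ (-α - δ) / (1 - α)) + ENNReal.ofReal (2 ^ α / α * τ ^ (-α - δ)) :=
        add_le_add hA hB
    _ = ENNReal.ofReal (τ ^ (-α - δ) / (1 - α) + 2 ^ α / α * τ ^ (-α - δ)) :=
        (ENNReal.ofReal_add (div_nonneg (Real.rpow_nonneg hτ.le _) (by linarith))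
          (mul_nonneg (div_nonneg (Real.rpow_nonneg (by norm_num) _) hα0.le)
            (Real.rpow_nonneg hτ.le _))).symm
    _ = ENNReal.ofReal ((1 / (1 - α) + 2 ^ α / α) * τ ^ (-α - δ)) := by
        congr 1; ring

/-- Under the renewal integral equation for `U` with nonnegative
`u⁰ ∈ L¹(0,∞)` not a.e. zero and mass `M`, there exists `C₋ > 0`, depending only on
`α` and `u⁰`, such that for every `δ ∈ (0,1)`, `∫₀^∞ t^{-α-δ} U(t) dt ≥ C₋/δ`. -/
theorem stmt_8 (α : ℝ) (hα : α ∈ Set.Ioo (0:ℝ) 1)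
    (u0 : ℝ → ℝ) (hu0int : IntegrableOn u0 (Set.Ioi 0))
    (hu0pos : ∀ a > (0:ℝ), 0 ≤ u0 a)
    (hu0ne : ¬ (∀ᵐ a ∂(volume.restrict (Set.Ioi (0:ℝ))), u0 a = 0))
    (M : ℝ) (hM : M = ∫ a in Set.Ioi (0:ℝ), u0 a)
    (U : ℝ → ℝ) (hUpos : ∀ t > (0:ℝ), 0 ≤ U t)
    (hUloc : ∀ t > (0:ℝ), IntegrableOn U (Set.Ioc 0 t))
    (heq : ∀ t > (0:ℝ),
      (∫ τ in Set.Ioc (0:ℝ) t, U τ * (1 + t - τ) ^ (-α))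
        = M - ∫ a in Set.Ioi (0:ℝ), u0 a * ((1 + a) / (1 + t + a)) ^ α) :
    ∃ C > (0:ℝ), ∀ δ ∈ Set.Ioo (0:ℝ) 1,
      ENNReal.ofReal (C / δ)
        ≤ ∫⁻ t in Set.Ioi (0:ℝ), ENNReal.ofReal (t ^ (-α - δ) * U t) := by
  obtain ⟨hα0, hα1⟩ := hα
  -- nonnegativity of u0 a.e.
  have hu0nn : 0 ≤ᵐ[volume.restrict (Set.Ioi (0:ℝ))] u0 := by
    rw [EventuallyLE]
    filter_upwards [ae_restrict_mem measurableSet_Ioi] with a ha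
    exact hu0pos a ha
  -- M is positive
  have hMpos : 0 < M := by
    have hM0 : 0 ≤ M := hM ▸ integral_nonneg_of_ae hu0nn
    rcases hM0.lt_or_eq with h | h
    · exact h
    · exfalso
      apply hu0ne
      have := (integral_eq_zero_iff_of_nonneg_ae hu0nn hu0int).mp (hM ▸ h.symm)
      filter_upwards [this] with a ha
      exact ha
  -- tail tends to zero
  have htail0 : Tendsto (fun t : ℝ => ∫ a in Set.Ioi (0:ℝ), u0 a * ((1 + a) / (1 + t + a)) ^ α)
      atTop (𝓝 0) := by
    have key : Tendsto (fun t : ℝ => ∫ a in Set.Ioi (0:ℝ), u0 a * ((1 + a) / (1 + t + a)) ^ α)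
        atTop (𝓝 (∫ a in Set.Ioi (0:ℝ), (0:ℝ))) := by
      apply tendsto_integral_filter_of_dominated_convergence (fun a => |u0 a|)
      · filter_upwards with t
        apply hu0int.aestronglyMeasurable.mul
        apply Measurable.aestronglyMeasurable
        fun_prop
      · filter_upwards [eventually_ge_atTop (0:ℝ)] with t ht
        filter_upwards [ae_restrict_mem measurableSet_Ioi] with a ha
        simp only [Set.mem_Ioi] at ha
        have hb0 : 0 ≤ (1 + a) / (1 + t + a) := by positivity
        have hb1 : (1 + a) / (1 + t + a) ≤ 1 := by
          rw [div_le_one (by linarith)]; linarith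
        have h1 : ((1 + a) / (1 + t + a)) ^ α ≤ 1 := Real.rpow_le_one hb0 hb1 hα0.le
        rw [norm_mul]
        calc ‖u0 a‖ * ‖((1 + a) / (1 + t + a)) ^ α‖
            ≤ ‖u0 a‖ * 1 := by
              apply mul_le_mul_of_nonneg_left _ (norm_nonneg _)
              rw [Real.norm_eq_abs, abs_of_nonneg (Real.rpow_nonneg hb0 _)]
              exact h1
          _ = |u0 a| := by rw [mul_one, Real.norm_eq_abs]
      · exact hu0int.abs
      · filter_upwards [ae_restrict_mem measurableSet_Ioi] with a ha
        simp only [Set.mem_Ioi] at ha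
        have hd : Tendsto (fun t : ℝ => 1 + t + a) atTop atTop := by
          apply tendsto_atTop_add_const_right
          exact tendsto_atTop_add_const_left _ 1 tendsto_id
        have hr : Tendsto (fun t : ℝ => (1 + a) / (1 + t + a)) atTop (𝓝 0) :=
          Tendsto.div_atTop tendsto_const_nhds hd
        have hc : Tendsto (fun x : ℝ => x ^ α) (𝓝 0) (𝓝 0) := by
          have h2 := (Real.continuousAt_rpow_const 0 α (Or.inr hα0.le)).tendsto
          rwa [Real.zero_rpow hα0.ne'] at h2
        have h3 := (hc.comp hr).const_mul (u0 a)
        simpa using h3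
    simpa using key
  -- choose T
  obtain ⟨T₀, hT₀⟩ := (htail0.eventually_lt_const (show (0:ℝ) < M / 2 by linarith)).exists_forall_of_atTop
  set T : ℝ := max T₀ 1 with hTdef
  have hT1 : (1:ℝ) ≤ T := le_max_right _ _
  have hT0 : (0:ℝ) < T := lt_of_lt_of_le one_pos hT1
  have hTtail : ∀ t, T ≤ t → (∫ a in Set.Ioi (0:ℝ), u0 a * ((1 + a) / (1 + t + a)) ^ α) < M / 2 :=
    fun t ht => hT₀ t (le_trans (le_max_left _ _) ht)
  -- U is a.e. strongly measurable on (0,∞)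
  have hUmeas : AEStronglyMeasurable U (volume.restrict (Set.Ioi (0:ℝ))) := by
    have hun : Set.Ioi (0:ℝ) = ⋃ n : ℕ, Set.Ioc (0:ℝ) (n + 1) := by
      ext x
      simp only [Set.mem_Ioi, Set.mem_iUnion, Set.mem_Ioc]
      constructor
      · intro hx
        obtain ⟨n, hn⟩ := exists_nat_ge x
        exact ⟨n, hx, hn.trans (by linarith)⟩
      · rintro ⟨n, h1, _⟩
        exact h1
    rw [hun, aestronglyMeasurable_iUnion_iff]
    intro n
    exact (hUloc (n + 1) (by positivity)).aestronglyMeasurable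
  -- lower bound for the convolution integral
  have hconv : ∀ t, T ≤ t → ENNReal.ofReal (M / 2)
      ≤ ∫⁻ τ in Set.Ioc (0:ℝ) t, ENNReal.ofReal (U τ * (1 + t - τ) ^ (-α)) := by
    intro t ht
    have ht0 : (0:ℝ) < t := lt_of_lt_of_le hT0 ht
    have hfmeas : AEStronglyMeasurable (fun τ => U τ * (1 + t - τ) ^ (-α))
        (volume.restrict (Set.Ioc (0:ℝ) t)) := by
      apply (hUloc t ht0).aestronglyMeasurable.mul
      apply Measurable.aestronglyMeasurable
      fun_prop
    have hfint : IntegrableOn (fun τ => U τ * (1 + t - τ) ^ (-α)) (Set.Ioc (0:ℝ) t) := by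
      apply Integrable.mono' (hUloc t ht0).abs hfmeas
      filter_upwards [ae_restrict_mem measurableSet_Ioc] with τ hτ
      rw [norm_mul]
      have hb : (1:ℝ) ≤ 1 + t - τ := by linarith [hτ.2]
      have h1 : (1 + t - τ) ^ (-α) ≤ 1 :=
        Real.rpow_le_one_of_one_le_of_nonpos hb (by linarith)
      calc ‖U τ‖ * ‖(1 + t - τ) ^ (-α)‖ ≤ ‖U τ‖ * 1 := by
            apply mul_le_mul_of_nonneg_left _ (norm_nonneg _)
            rw [Real.norm_eq_abs, abs_of_nonneg (Real.rpow_nonneg (by linarith) _)]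
            exact h1
        _ = |U τ| := by rw [mul_one, Real.norm_eq_abs]
    have hfnn : 0 ≤ᵐ[volume.restrict (Set.Ioc (0:ℝ) t)] fun τ => U τ * (1 + t - τ) ^ (-α) := by
      filter_upwards [ae_restrict_mem measurableSet_Ioc] with τ hτ
      exact mul_nonneg (hUpos τ hτ.1) (Real.rpow_nonneg (by linarith [hτ.2]) _)
    rw [← ofReal_integral_eq_lintegral_ofReal hfint hfnn]
    apply ENNReal.ofReal_le_ofReal
    rw [heq t ht0]
    linarith [hTtail t ht]
  -- the constant
  set C₀ : ℝ := 1 / (1 - α) + 2 ^ α / α with hC₀def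
  have hC₀pos : 0 < C₀ := by
    have h1 : (0:ℝ) < 1 / (1 - α) := by
      apply div_pos one_pos; linarith
    have h2 : (0:ℝ) < 2 ^ α / α := div_pos (Real.rpow_pos_of_pos two_pos α) hα0
    rw [hC₀def]
    linarith
  refine ⟨M / 2 / (T * C₀), by positivity, ?_⟩
  intro δ hδ
  obtain ⟨hδ0, hδ1⟩ := hδ
  -- the double integral function
  set g : ℝ → ℝ → ENNReal := fun t τ =>
    if τ ≤ t then ENNReal.ofReal (t ^ (-1 - δ) * (U τ * (1 + t - τ) ^ (-α))) else 0 with hgdef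
  have hgmeas : AEMeasurable (fun p : ℝ × ℝ => g p.1 p.2)
      ((volume.restrict (Set.Ioi T)).prod (volume.restrict (Set.Ioi (0:ℝ)))) := by
    have h1 : AEMeasurable (fun p : ℝ × ℝ => U p.2)
        ((volume.restrict (Set.Ioi T)).prod (volume.restrict (Set.Ioi (0:ℝ)))) :=
      hUmeas.aemeasurable.comp_snd
    have h2 : Measurable fun p : ℝ × ℝ => p.1 ^ (-1 - δ) := by fun_prop
    have h3 : Measurable fun p : ℝ × ℝ => (1 + p.1 - p.2) ^ (-α) := by fun_prop
    have h4 : AEMeasurable (fun p : ℝ × ℝ =>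
        ENNReal.ofReal (p.1 ^ (-1 - δ) * (U p.2 * (1 + p.1 - p.2) ^ (-α))))
        ((volume.restrict (Set.Ioi T)).prod (volume.restrict (Set.Ioi (0:ℝ)))) := by
      apply ENNReal.measurable_ofReal.comp_aemeasurable
      exact h2.aemeasurable.mul (h1.mul h3.aemeasurable)
    have hset : MeasurableSet {p : ℝ × ℝ | p.2 ≤ p.1} :=
      measurableSet_le measurable_snd measurable_fst
    have : (fun p : ℝ × ℝ => g p.1 p.2) = Set.indicator {p : ℝ × ℝ | p.2 ≤ p.1}
        (fun p => ENNReal.ofReal (p.1 ^ (-1 - δ) * (U p.2 * (1 + p.1 - p.2) ^ (-α)))) := by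
      ext p
      simp only [hgdef, Set.indicator_apply, Set.mem_setOf_eq]
    rw [this]
    exact h4.indicator hset
  -- step 1: lower bound
  have hlow : ENNReal.ofReal (M / 2 * (T ^ (-δ) / δ))
      ≤ ∫⁻ t in Set.Ioi T, ∫⁻ τ in Set.Ioi (0:ℝ), g t τ := by
    have hstep : ∀ t ∈ Set.Ioi T, ENNReal.ofReal (M / 2) * ENNReal.ofReal (t ^ (-1 - δ))
        ≤ ∫⁻ τ in Set.Ioi (0:ℝ), g t τ := by
      intro t ht
      simp only [Set.mem_Ioi] at ht
      have ht0 : (0:ℝ) < t := lt_trans hT0 ht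
      calc ENNReal.ofReal (M / 2) * ENNReal.ofReal (t ^ (-1 - δ))
          = ENNReal.ofReal (t ^ (-1 - δ)) * ENNReal.ofReal (M / 2) := mul_comm _ _
        _ ≤ ENNReal.ofReal (t ^ (-1 - δ)) *
              ∫⁻ τ in Set.Ioc (0:ℝ) t, ENNReal.ofReal (U τ * (1 + t - τ) ^ (-α)) :=
            mul_le_mul_right (hconv t ht.le) _
        _ = ∫⁻ τ in Set.Ioc (0:ℝ) t,
              ENNReal.ofReal (t ^ (-1 - δ)) * ENNReal.ofReal (U τ * (1 + t - τ) ^ (-α)) :=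
            (lintegral_const_mul' _ _ ENNReal.ofReal_ne_top).symm
        _ = ∫⁻ τ in Set.Ioc (0:ℝ) t, g t τ := by
            apply setLIntegral_congr_fun measurableSet_Ioc
            intro τ hτ
            simp only [hgdef, if_pos hτ.2]
            rw [ENNReal.ofReal_mul (Real.rpow_nonneg ht0.le _)]
        _ ≤ ∫⁻ τ in Set.Ioi (0:ℝ), g t τ := lintegral_mono_set Set.Ioc_subset_Ioi_self
    calc ENNReal.ofReal (M / 2 * (T ^ (-δ) / δ))
        = ENNReal.ofReal (M / 2) * ENNReal.ofReal (T ^ (-δ) / δ) :=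
          ENNReal.ofReal_mul (by linarith)
      _ = ENNReal.ofReal (M / 2) * ∫⁻ t in Set.Ioi T, ENNReal.ofReal (t ^ (-1 - δ)) := by
          rw [aux_weight T δ hT0 hδ0]
      _ = ∫⁻ t in Set.Ioi T, ENNReal.ofReal (M / 2) * ENNReal.ofReal (t ^ (-1 - δ)) :=
          (lintegral_const_mul' _ _ ENNReal.ofReal_ne_top).symm
      _ ≤ ∫⁻ t in Set.Ioi T, ∫⁻ τ in Set.Ioi (0:ℝ), g t τ := by
          apply lintegral_mono_ae
          filter_upwards [ae_restrict_mem measurableSet_Ioi] with t ht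
          exact hstep t ht
  -- step 2: swap
  have hswap : ∫⁻ t in Set.Ioi T, ∫⁻ τ in Set.Ioi (0:ℝ), g t τ
      = ∫⁻ τ in Set.Ioi (0:ℝ), ∫⁻ t in Set.Ioi T, g t τ :=
    lintegral_lintegral_swap hgmeas
  -- step 3: upper bound for inner integral
  have hup : ∀ τ ∈ Set.Ioi (0:ℝ), ∫⁻ t in Set.Ioi T, g t τ
      ≤ ENNReal.ofReal C₀ * ENNReal.ofReal (τ ^ (-α - δ) * U τ) := by
    intro τ hτ
    simp only [Set.mem_Ioi] at hτ
    have hUτ : 0 ≤ U τ := hUpos τ hτ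
    have hptwise : ∀ t, g t τ ≤ ENNReal.ofReal (U τ) *
        (Set.Ici τ).indicator (fun t => ENNReal.ofReal (t ^ (-1 - δ) * (1 + t - τ) ^ (-α))) t := by
      intro t
      simp only [hgdef, Set.indicator_apply, Set.mem_Ici]
      by_cases h : τ ≤ t
      · rw [if_pos h, if_pos h, ← ENNReal.ofReal_mul hUτ]
        exact ENNReal.ofReal_le_ofReal (le_of_eq (by ring))
      · rw [if_neg h, if_neg h, mul_zero]
    calc ∫⁻ t in Set.Ioi T, g t τ
        ≤ ∫⁻ t in Set.Ioi T, ENNReal.ofReal (U τ) *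
            (Set.Ici τ).indicator (fun t => ENNReal.ofReal (t ^ (-1 - δ) * (1 + t - τ) ^ (-α))) t :=
          lintegral_mono fun t => hptwise t
      _ = ENNReal.ofReal (U τ) * ∫⁻ t in Set.Ioi T,
            (Set.Ici τ).indicator (fun t => ENNReal.ofReal (t ^ (-1 - δ) * (1 + t - τ) ^ (-α))) t :=
          lintegral_const_mul' _ _ ENNReal.ofReal_ne_top
      _ ≤ ENNReal.ofReal (U τ) * ∫⁻ t,
            (Set.Ici τ).indicator (fun t => ENNReal.ofReal (t ^ (-1 - δ) * (1 + t - τ) ^ (-α))) t :=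
          mul_le_mul_right (setLIntegral_le_lintegral _ _) _
      _ = ENNReal.ofReal (U τ) *
            ∫⁻ t in Set.Ici τ, ENNReal.ofReal (t ^ (-1 - δ) * (1 + t - τ) ^ (-α)) := by
          rw [lintegral_indicator measurableSet_Ici]
      _ ≤ ENNReal.ofReal (U τ) * ENNReal.ofReal (C₀ * τ ^ (-α - δ)) :=
          mul_le_mul_right (aux_kernel α δ τ hα0 hα1 hδ0 hτ) _
      _ = ENNReal.ofReal C₀ * ENNReal.ofReal (τ ^ (-α - δ) * U τ) := by
          rw [← ENNReal.ofReal_mul hUτ, ← ENNReal.ofReal_mul hC₀pos.le]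
          congr 1
          ring
  -- step 4: conclude
  have hchain : ENNReal.ofReal (M / 2 * (T ^ (-δ) / δ))
      ≤ ENNReal.ofReal C₀ * ∫⁻ t in Set.Ioi (0:ℝ), ENNReal.ofReal (t ^ (-α - δ) * U t) := by
    calc ENNReal.ofReal (M / 2 * (T ^ (-δ) / δ))
        ≤ ∫⁻ t in Set.Ioi T, ∫⁻ τ in Set.Ioi (0:ℝ), g t τ := hlow
      _ = ∫⁻ τ in Set.Ioi (0:ℝ), ∫⁻ t in Set.Ioi T, g t τ := hswap
      _ ≤ ∫⁻ τ in Set.Ioi (0:ℝ), ENNReal.ofReal C₀ * ENNReal.ofReal (τ ^ (-α - δ) * U τ) := by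
          apply lintegral_mono_ae
          filter_upwards [ae_restrict_mem measurableSet_Ioi] with τ hτ
          exact hup τ hτ
      _ = ENNReal.ofReal C₀ * ∫⁻ t in Set.Ioi (0:ℝ), ENNReal.ofReal (t ^ (-α - δ) * U t) :=
          lintegral_const_mul' _ _ ENNReal.ofReal_ne_top
  have hreal : C₀ * (M / 2 / (T * C₀) / δ) ≤ M / 2 * (T ^ (-δ) / δ) := by
    have hTδ : 1 / T ≤ T ^ (-δ) := by
      have h1 : T ^ (-1 : ℝ) ≤ T ^ (-δ) :=
        Real.rpow_le_rpow_of_exponent_le hT1 (by linarith)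
      rwa [Real.rpow_neg_one, inv_eq_one_div] at h1
    have he : C₀ * (M / 2 / (T * C₀) / δ) = M / 2 * ((1 / T) / δ) := by
      field_simp
    rw [he]
    have hM2 : (0:ℝ) ≤ M / 2 := by linarith
    gcongr
  have hfinal : ENNReal.ofReal C₀ * ENNReal.ofReal (M / 2 / (T * C₀) / δ)
      ≤ ENNReal.ofReal C₀ * ∫⁻ t in Set.Ioi (0:ℝ), ENNReal.ofReal (t ^ (-α - δ) * U t) := by
    calc ENNReal.ofReal C₀ * ENNReal.ofReal (M / 2 / (T * C₀) / δ)
        = ENNReal.ofReal (C₀ * (M / 2 / (T * C₀) / δ)) :=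
          (ENNReal.ofReal_mul hC₀pos.le).symm
      _ ≤ ENNReal.ofReal (M / 2 * (T ^ (-δ) / δ)) := ENNReal.ofReal_le_ofReal hreal
      _ ≤ _ := hchain
  exact (ENNReal.mul_le_mul_iff_right (ENNReal.ofReal_pos.mpr hC₀pos).ne' ENNReal.ofReal_ne_top).mp
    hfinal
end

section
/- Let 0 < α < 1 and let u : (0,∞) → [0,∞) be measurable, integrable on (0,1), and suppose there exist constants 0 < c ≤ C such that c t^{α-1} ≤ u(t) ≤ C t^{α-1} for all t ≥ 1. Then there exist constants c' > 0, C' > 0 and s₀ ∈ (0,1] such that c' s^{-α} ≤ ∫₀^∞ e^{-st} u(t) dt ≤ C' s^{-α} for all s ∈ (0, s₀]. -/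
open MeasureTheory Real Set

/-- If `u ≥ 0` on `(0,∞)` is measurable, integrable on `(0,1)` and
satisfies `c t^{α-1} ≤ u(t) ≤ C t^{α-1}` for `t ≥ 1`, then there exist `c', C' > 0` and
`s₀ ∈ (0,1]` with `c' s^{-α} ≤ ∫₀^∞ e^{-st} u(t) dt ≤ C' s^{-α}` for all `s ∈ (0,s₀]`. -/
theorem stmt_10 (α : ℝ) (hα : α ∈ Set.Ioo (0:ℝ) 1)
    (u : ℝ → ℝ) (hum : Measurable u) (hupos : ∀ t > (0:ℝ), 0 ≤ u t)
    (huint : IntegrableOn u (Set.Ioo 0 1))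
    (c C : ℝ) (hc : 0 < c) (hcC : c ≤ C)
    (hbound : ∀ t ≥ (1:ℝ), c * t ^ (α - 1) ≤ u t ∧ u t ≤ C * t ^ (α - 1)) :
    ∃ c' > (0:ℝ), ∃ C' > (0:ℝ), ∃ s₀ ∈ Set.Ioc (0:ℝ) 1, ∀ s ∈ Set.Ioc (0:ℝ) s₀,
      ENNReal.ofReal (c' * s ^ (-α))
          ≤ (∫⁻ t in Set.Ioi (0:ℝ), ENNReal.ofReal (Real.exp (-(s * t)) * u t)) ∧
        (∫⁻ t in Set.Ioi (0:ℝ), ENNReal.ofReal (Real.exp (-(s * t)) * u t))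
          ≤ ENNReal.ofReal (C' * s ^ (-α)) := by
  obtain ⟨hα0, hα1⟩ := hα
  have hΓpos : 0 < Real.Gamma α := Real.Gamma_pos_of_pos hα0
  set I := ∫ t in Set.Ioo (0:ℝ) 1, u t with hIdef
  have hI0 : 0 ≤ I := setIntegral_nonneg measurableSet_Ioo (fun t ht => hupos t ht.1)
  have hC0 : 0 < C := lt_of_lt_of_le hc hcC
  refine ⟨c * Real.exp (-2) * 2 ^ (α - 1), by positivity,
    I + C * Real.Gamma α, by positivity, 1, ⟨zero_lt_one, le_refl 1⟩, ?_⟩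
  intro s hs
  obtain ⟨hs0, hs1⟩ := hs
  have hsinv : (1:ℝ) ≤ 1 / s := by
    rw [le_div_iff₀ hs0]; linarith
  constructor
  · -- lower bound
    have hsub : Icc (1/s) (2/s) ⊆ Ioi (0:ℝ) := fun t ht =>
      lt_of_lt_of_le (by positivity) ht.1
    have key : (2/s) ^ (α-1) * (1/s) = 2 ^ (α-1) * s ^ (-α) := by
      rw [Real.div_rpow (by norm_num) hs0.le, one_div, ← Real.rpow_neg_one s,
        div_eq_mul_inv, ← Real.rpow_neg hs0.le, mul_assoc, ← Real.rpow_add hs0]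
      ring_nf
    calc ENNReal.ofReal (c * Real.exp (-2) * 2 ^ (α - 1) * s ^ (-α))
        = ENNReal.ofReal (c * Real.exp (-2) * (2/s) ^ (α-1)) * ENNReal.ofReal (1/s) := by
          rw [← ENNReal.ofReal_mul (by positivity)]
          congr 1
          linear_combination (-(c * Real.exp (-2))) * key
      _ = ∫⁻ _ in Icc (1/s) (2/s), ENNReal.ofReal (c * Real.exp (-2) * (2/s) ^ (α-1)) := by
          rw [setLIntegral_const, Real.volume_Icc, div_sub_div_same]
          norm_num
      _ ≤ ∫⁻ t in Icc (1/s) (2/s), ENNReal.ofReal (Real.exp (-(s * t)) * u t) := by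
          refine setLIntegral_mono
            (((measurable_const.mul measurable_id).neg.exp.mul hum).ennreal_ofReal)
            (fun t ht => ?_)
          refine ENNReal.ofReal_le_ofReal ?_
          have ht1 : (1:ℝ) ≤ t := le_trans hsinv ht.1
          have ht0 : 0 < t := lt_of_lt_of_le zero_lt_one ht1
          have hst : s * t ≤ 2 := by
            have := mul_le_mul_of_nonneg_left ht.2 hs0.le
            calc s * t ≤ s * (2/s) := this
              _ = 2 := by field_simp
          have hexp : Real.exp (-2) ≤ Real.exp (-(s*t)) :=
            Real.exp_le_exp.2 (by linarith)
          have hrp : (2/s) ^ (α-1) ≤ t ^ (α-1) :=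
            Real.rpow_le_rpow_of_nonpos ht0 ht.2 (by linarith)
          have hu : c * (2/s) ^ (α-1) ≤ u t :=
            le_trans (mul_le_mul_of_nonneg_left hrp hc.le) (hbound t ht1).1
          calc c * Real.exp (-2) * (2/s) ^ (α-1)
              = Real.exp (-2) * (c * (2/s) ^ (α-1)) := by ring
            _ ≤ Real.exp (-(s*t)) * u t :=
                mul_le_mul hexp hu (by positivity) (Real.exp_pos _).le
      _ ≤ ∫⁻ t in Ioi (0:ℝ), ENNReal.ofReal (Real.exp (-(s * t)) * u t) :=
          lintegral_mono_set' (HasSubset.Subset.eventuallyLE hsub)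
  · -- upper bound
    have hmeas : Measurable fun t => ENNReal.ofReal (Real.exp (-(s * t)) * u t) :=
      ((measurable_const.mul measurable_id).neg.exp.mul hum).ennreal_ofReal
    have hsplit : (Ioi (0:ℝ)) = Ioo 0 1 ∪ Ici 1 := (Ioo_union_Ici_eq_Ioi zero_lt_one).symm
    have hdisj : Disjoint (Ioo (0:ℝ) 1) (Ici 1) := by
      rw [Set.disjoint_left]
      rintro t ⟨_, ht1⟩ ht2
      exact absurd ht2 (not_le.2 ht1)
    rw [hsplit, lintegral_union measurableSet_Ici hdisj]
    have h1 : (∫⁻ t in Ioo (0:ℝ) 1, ENNReal.ofReal (Real.exp (-(s * t)) * u t))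
        ≤ ENNReal.ofReal I := by
      rw [hIdef, ofReal_integral_eq_lintegral_ofReal huint
        ((ae_restrict_iff' measurableSet_Ioo).2 (ae_of_all _ fun t ht => hupos t ht.1))]
      refine setLIntegral_mono hum.ennreal_ofReal (fun t ht => ?_)
      refine ENNReal.ofReal_le_ofReal ?_
      have : Real.exp (-(s*t)) ≤ 1 := Real.exp_le_one_iff.2 (by nlinarith [ht.1])
      nlinarith [hupos t ht.1, Real.exp_pos (-(s*t))]
    have hint : IntegrableOn (fun t => C * (t ^ (α-1) * Real.exp (-(s*t)))) (Ioi 0) := by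
      have := (integrableOn_rpow_mul_exp_neg_mul_rpow
        (p := 1) (s := α-1) (b := s) (by linarith) zero_lt_one hs0).const_mul C
      simp only [Real.rpow_one, neg_mul] at this
      exact this
    have h2 : (∫⁻ t in Ici (1:ℝ), ENNReal.ofReal (Real.exp (-(s * t)) * u t))
        ≤ ENNReal.ofReal (C * ((1/s) ^ α * Real.Gamma α)) := by
      have hval : (∫ t in Ioi (0:ℝ), C * (t ^ (α-1) * Real.exp (-(s*t))))
          = C * ((1/s) ^ α * Real.Gamma α) := by
        rw [MeasureTheory.integral_const_mul, Real.integral_rpow_mul_exp_neg_mul_Ioi hα0 hs0]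
      rw [← hval, ofReal_integral_eq_lintegral_ofReal hint
        ((ae_restrict_iff' measurableSet_Ioi).2 (ae_of_all _ fun t ht => by
          have : (0:ℝ) < t := ht
          positivity))]
      calc (∫⁻ t in Ici (1:ℝ), ENNReal.ofReal (Real.exp (-(s * t)) * u t))
          ≤ ∫⁻ t in Ici (1:ℝ), ENNReal.ofReal (C * (t ^ (α-1) * Real.exp (-(s*t)))) := by
            have hm1 : Measurable (fun t:ℝ => t ^ (α-1)) := by measurability
            refine setLIntegral_mono
              ((measurable_const.mul (hm1.mul
                (measurable_const.mul measurable_id).neg.exp)).ennreal_ofReal)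
              (fun t ht => ?_)
            refine ENNReal.ofReal_le_ofReal ?_
            have hut := (hbound t ht).2
            have hexp := (Real.exp_pos (-(s*t))).le
            nlinarith
        _ ≤ ∫⁻ t in Ioi (0:ℝ), ENNReal.ofReal (C * (t ^ (α-1) * Real.exp (-(s*t)))) :=
            lintegral_mono_set' (HasSubset.Subset.eventuallyLE
              (fun t ht => show (0:ℝ) < t from lt_of_lt_of_le zero_lt_one ht))
    have hss : (1:ℝ) ≤ s ^ (-α) := by
      rw [Real.rpow_neg hs0.le, one_le_inv_iff₀]
      exact ⟨Real.rpow_pos_of_pos hs0 α, Real.rpow_le_one hs0.le hs1 hα0.le⟩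
    have hinvs : (1/s) ^ α = s ^ (-α) := by
      rw [one_div, Real.inv_rpow hs0.le, ← Real.rpow_neg hs0.le]
    calc (∫⁻ t in Ioo (0:ℝ) 1, ENNReal.ofReal (Real.exp (-(s * t)) * u t))
          + (∫⁻ t in Ici (1:ℝ), ENNReal.ofReal (Real.exp (-(s * t)) * u t))
        ≤ ENNReal.ofReal I + ENNReal.ofReal (C * ((1/s) ^ α * Real.Gamma α)) :=
          add_le_add h1 h2
      _ ≤ ENNReal.ofReal ((I + C * Real.Gamma α) * s ^ (-α)) := by
          rw [← ENNReal.ofReal_add hI0 (by positivity)]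
          refine ENNReal.ofReal_le_ofReal ?_
          rw [hinvs]
          nlinarith [Real.rpow_pos_of_pos hs0 (-α)]
end

section
/- Let 0 < α < 1, ε > 0 and s > 0. Then 0 ≤ Γ(1-α) s^{α-1} − ∫₀^∞ e^{-st} (ε + t)^{-α} dt ≤ ε^{1-α} / (1-α), where Γ(1-α) s^{α-1} = ∫₀^∞ e^{-st} t^{-α} dt. -/
open MeasureTheory Real Set

open Filter Topology

lemma bern_key {α ε : ℝ} (hα0 : 0 < α) (hα1 : α < 1) (hε : 0 < ε) :
    ∀ t : ℝ, 0 < t → (ε + t) ^ ((1:ℝ)-α) ≤ t ^ ((1:ℝ)-α) + (1-α)*ε*t^(-α) := by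
  intro t ht
  have h0 : ε + t = t * (1 + ε/t) := by field_simp; ring
  have hdt : (0:ℝ) ≤ ε / t := by positivity
  have hb : (1 + ε/t) ^ ((1:ℝ)-α) ≤ 1 + (1-α)*(ε/t) :=
    rpow_one_add_le_one_add_mul_self (by linarith) (by linarith) (by linarith)
  have ht2 : t ^ ((1:ℝ)-α) / t = t ^ (-α) := by
    rw [Real.rpow_sub ht, Real.rpow_one, Real.rpow_neg ht.le]
    field_simp
  calc (ε+t) ^ ((1:ℝ)-α) = t ^ ((1:ℝ)-α) * (1 + ε/t) ^ ((1:ℝ)-α) := by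
        rw [h0, Real.mul_rpow ht.le (by positivity)]
    _ ≤ t ^ ((1:ℝ)-α) * (1 + (1-α)*(ε/t)) :=
        mul_le_mul_of_nonneg_left hb (Real.rpow_nonneg ht.le _)
    _ = t ^ ((1:ℝ)-α) + (1-α)*ε*(t ^ ((1:ℝ)-α)/t) := by ring
    _ = t ^ ((1:ℝ)-α) + (1-α)*ε*t^(-α) := by rw [ht2]

lemma diff_facts {α ε : ℝ} (hα0 : 0 < α) (hα1 : α < 1) (hε : 0 < ε) :
    IntegrableOn (fun t : ℝ => t ^ (-α) - (ε + t) ^ (-α)) (Set.Ioi 0) ∧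
    ∫ t in Set.Ioi (0:ℝ), (t ^ (-α) - (ε + t) ^ (-α)) = ε ^ ((1:ℝ)-α) / (1-α) := by
  have h1α : (0:ℝ) < 1 - α := by linarith
  set F : ℝ → ℝ := fun t => (t ^ ((1:ℝ)-α) - (ε + t) ^ ((1:ℝ)-α)) / (1-α) with hF
  have hderiv : ∀ t ∈ Set.Ioi (0:ℝ),
      HasDerivAt F (t ^ (-α) - (ε + t) ^ (-α)) t := by
    intro t ht
    have ht' : (0:ℝ) < t := ht
    have hεt : (0:ℝ) < ε + t := by linarith
    have h1 : HasDerivAt (fun x : ℝ => x ^ ((1:ℝ)-α)) ((1-α) * t ^ ((1:ℝ)-α-1)) t :=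
      Real.hasDerivAt_rpow_const (Or.inl ht'.ne')
    have h2' : HasDerivAt (fun x : ℝ => ε + x) 1 t := (hasDerivAt_id t).const_add ε
    have h2 : HasDerivAt (fun x : ℝ => (ε + x) ^ ((1:ℝ)-α))
        ((1-α) * (ε + t) ^ ((1:ℝ)-α-1) * 1) t :=
      (Real.hasDerivAt_rpow_const (p := (1:ℝ)-α) (Or.inl hεt.ne')).comp t h2'
    have h3 := (h1.sub h2).div_const (1-α)
    have he : (1:ℝ) - α - 1 = -α := by ring
    rw [he] at h3
    refine h3.congr_deriv ?_
    rw [div_eq_iff h1α.ne']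
    ring
  have g'pos : ∀ t ∈ Set.Ioi (0:ℝ), 0 ≤ t ^ (-α) - (ε + t) ^ (-α) := by
    intro t ht
    have ht' : (0:ℝ) < t := ht
    have : (ε + t) ^ (-α) ≤ t ^ (-α) :=
      Real.rpow_le_rpow_of_nonpos ht' (by linarith) (by linarith)
    linarith
  have hcont : ContinuousWithinAt F (Set.Ici 0) 0 := by
    apply ContinuousWithinAt.div_const
    apply ContinuousWithinAt.sub
    · exact (Real.continuousAt_rpow_const 0 ((1:ℝ)-α) (Or.inr h1α.le)).continuousWithinAt
    · exact ((Real.continuousAt_rpow_const (ε + 0) ((1:ℝ)-α)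
        (Or.inl (by simpa using hε.ne'))).comp
        (by fun_prop : ContinuousAt (fun x : ℝ => ε + x) 0)).continuousWithinAt
  have htend : Tendsto F atTop (𝓝 0) := by
    have hup : ∀ᶠ t in atTop, F t ≤ 0 := by
      filter_upwards [eventually_gt_atTop (0:ℝ)] with t ht
      have : t ^ ((1:ℝ)-α) ≤ (ε + t) ^ ((1:ℝ)-α) :=
        Real.rpow_le_rpow ht.le (by linarith) h1α.le
      apply div_nonpos_of_nonpos_of_nonneg <;> linarith
    have hlo : ∀ᶠ t in atTop, -(ε * t ^ (-α)) ≤ F t := by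
      filter_upwards [eventually_gt_atTop (0:ℝ)] with t ht
      have hk := bern_key hα0 hα1 hε t ht
      rw [hF]
      simp only
      rw [le_div_iff₀ h1α]
      nlinarith [hk]
    have hl0 : Tendsto (fun t : ℝ => -(ε * t ^ (-α))) atTop (𝓝 0) := by
      have := (tendsto_rpow_neg_atTop hα0).const_mul ε
      simpa using this.neg
    exact tendsto_of_tendsto_of_tendsto_of_le_of_le' hl0 tendsto_const_nhds hlo hup
  have hF0 : F 0 = -(ε ^ ((1:ℝ)-α) / (1-α)) := by
    simp [hF, Real.zero_rpow h1α.ne', neg_div]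
  refine ⟨integrableOn_Ioi_deriv_of_nonneg hcont hderiv g'pos htend, ?_⟩
  rw [integral_Ioi_of_hasDerivAt_of_nonneg hcont hderiv g'pos htend, hF0]
  ring

/-- For `0 < α < 1`, `ε > 0`, `s > 0`,
`0 ≤ Γ(1-α) s^{α-1} − ∫₀^∞ e^{-st}(ε+t)^{-α} dt ≤ ε^{1-α}/(1-α)`, where
`Γ(1-α) s^{α-1} = ∫₀^∞ e^{-st} t^{-α} dt`. -/
theorem stmt_12 (α : ℝ) (hα : α ∈ Set.Ioo (0:ℝ) 1) (ε : ℝ) (hε : 0 < ε)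
    (s : ℝ) (hs : 0 < s) :
    (0 ≤ Real.Gamma (1 - α) * s ^ (α - 1)
        - ∫ t in Set.Ioi (0:ℝ), Real.exp (-(s * t)) * (ε + t) ^ (-α)) ∧
    (Real.Gamma (1 - α) * s ^ (α - 1)
        - (∫ t in Set.Ioi (0:ℝ), Real.exp (-(s * t)) * (ε + t) ^ (-α))
      ≤ ε ^ (1 - α) / (1 - α)) ∧
    Real.Gamma (1 - α) * s ^ (α - 1)
      = ∫ t in Set.Ioi (0:ℝ), Real.exp (-(s * t)) * t ^ (-α) := by
  obtain ⟨hα0, hα1⟩ := hα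
  have h1α : (0:ℝ) < 1 - α := by linarith
  -- Gamma identity
  have hpow : (1/s) ^ ((1:ℝ)-α) = s ^ (α-1) := by
    rw [one_div, ← Real.rpow_neg_one s, ← Real.rpow_mul hs.le]
    congr 1; ring
  have hi := Real.integral_rpow_mul_exp_neg_mul_Ioi (a := 1-α) (r := s) h1α hs
  have hGamma : Real.Gamma (1-α) * s ^ (α-1)
      = ∫ t in Set.Ioi (0:ℝ), Real.exp (-(s*t)) * t ^ (-α) := by
    calc Real.Gamma (1-α) * s ^ (α-1) = (1/s) ^ ((1:ℝ)-α) * Real.Gamma (1-α) := by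
          rw [hpow, mul_comm]
      _ = ∫ t in Set.Ioi (0:ℝ), t ^ ((1:ℝ)-α-1) * Real.exp (-(s*t)) := hi.symm
      _ = ∫ t in Set.Ioi (0:ℝ), Real.exp (-(s*t)) * t ^ (-α) := by
          refine setIntegral_congr_fun measurableSet_Ioi fun t ht => ?_
          rw [show (1:ℝ)-α-1 = -α from by ring, mul_comm]
  have gnn : ∀ t ∈ Set.Ioi (0:ℝ), 0 ≤ t ^ (-α) - (ε + t) ^ (-α) := by
    intro t ht
    have : (ε + t) ^ (-α) ≤ t ^ (-α) :=
      Real.rpow_le_rpow_of_nonpos ht (by linarith [ht.out]) (by linarith)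
    linarith
  obtain ⟨hg_int, hg_val⟩ := diff_facts hα0 hα1 hε
  -- measurability helpers
  have m1 : Measurable fun t : ℝ => Real.exp (-(s*t)) * (ε + t) ^ (-α) :=
    (Real.measurable_exp.comp (measurable_const.mul measurable_id).neg).mul
      ((measurable_const.add measurable_id).pow_const _)
  have m2 : Measurable fun t : ℝ => Real.exp (-(s*t)) * (t ^ (-α) - (ε + t) ^ (-α)) :=
    (Real.measurable_exp.comp (measurable_const.mul measurable_id).neg).mul
      ((measurable_id.pow_const _).sub ((measurable_const.add measurable_id).pow_const _))
  -- integrability of the regularized integrand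
  have hf2_int : IntegrableOn (fun t : ℝ => Real.exp (-(s*t)) * (ε + t) ^ (-α)) (Set.Ioi 0) := by
    have hb : IntegrableOn (fun t : ℝ => ε ^ (-α) * Real.exp (-(s*t))) (Set.Ioi 0) := by
      have := (exp_neg_integrableOn_Ioi 0 hs).const_mul (ε ^ (-α))
      simp only [neg_mul] at this
      exact this
    refine hb.mono' m1.aestronglyMeasurable ?_
    refine (ae_restrict_iff' measurableSet_Ioi).2 (ae_of_all _ fun t ht => ?_)
    have h1 : (ε + t) ^ (-α) ≤ ε ^ (-α) :=
      Real.rpow_le_rpow_of_nonpos hε (by linarith [ht.out]) (by linarith)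
    rw [Real.norm_eq_abs, abs_of_nonneg (mul_nonneg (Real.exp_pos _).le (Real.rpow_nonneg (by linarith [ht.out]) _))]
    calc Real.exp (-(s*t)) * (ε + t) ^ (-α) ≤ Real.exp (-(s*t)) * ε ^ (-α) :=
          mul_le_mul_of_nonneg_left h1 (Real.exp_pos _).le
      _ = ε ^ (-α) * Real.exp (-(s*t)) := by ring
  -- integrability of the difference integrand
  have hd_int : IntegrableOn
      (fun t : ℝ => Real.exp (-(s*t)) * (t ^ (-α) - (ε + t) ^ (-α))) (Set.Ioi 0) := by
    refine hg_int.mono' m2.aestronglyMeasurable ?_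
    refine (ae_restrict_iff' measurableSet_Ioi).2 (ae_of_all _ fun t ht => ?_)
    have hg0 := gnn t ht
    have hexp : Real.exp (-(s*t)) ≤ 1 := by
      rw [Real.exp_le_one_iff]
      have := ht.out; nlinarith
    rw [Real.norm_eq_abs, abs_of_nonneg (mul_nonneg (Real.exp_pos _).le hg0)]
    exact mul_le_of_le_one_left hg0 hexp
  have hf1_int : IntegrableOn (fun t : ℝ => Real.exp (-(s*t)) * t ^ (-α)) (Set.Ioi 0) := by
    have : (fun t : ℝ => Real.exp (-(s*t)) * t ^ (-α))
        = fun t => Real.exp (-(s*t)) * (t ^ (-α) - (ε + t) ^ (-α))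
          + Real.exp (-(s*t)) * (ε + t) ^ (-α) := by funext t; ring
    rw [this]; exact hd_int.add hf2_int
  have hsub : (∫ t in Set.Ioi (0:ℝ), Real.exp (-(s*t)) * t ^ (-α))
      - (∫ t in Set.Ioi (0:ℝ), Real.exp (-(s*t)) * (ε + t) ^ (-α))
      = ∫ t in Set.Ioi (0:ℝ), Real.exp (-(s*t)) * (t ^ (-α) - (ε + t) ^ (-α)) := by
    rw [← integral_sub hf1_int hf2_int]
    congr 1; funext t; ring
  refine ⟨?_, ?_, hGamma⟩
  · rw [hGamma, hsub]
    exact setIntegral_nonneg measurableSet_Ioi fun t ht =>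
      mul_nonneg (Real.exp_pos _).le (gnn t ht)
  · rw [hGamma, hsub, ← hg_val]
    refine setIntegral_mono_on hd_int hg_int measurableSet_Ioi fun t ht => ?_
    have hexp : Real.exp (-(s*t)) ≤ 1 := by
      rw [Real.exp_le_one_iff]
      have := ht.out; nlinarith
    exact mul_le_of_le_one_left (gnn t ht) hexp
end

section
/- Let 0 < α < 1 and let v : [0,∞) → ℝ be continuously differentiable with v(0) = 0. Then for every t > 0, the function F(t) = ∫₀^t v(τ) (t-τ)^{-α} dτ is differentiable at t and F'(t) = v(t) t^{-α} − α ∫₀^t (v(t-s) − v(t)) s^{-α-1} ds. -/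
open MeasureTheory Real Set

section helpers

lemma integrableOn_rpow_Ioo {β : ℝ} (hβ : -1 < β) (a b : ℝ) :
    IntegrableOn (fun x : ℝ => x ^ β) (Ioo a b) := by
  rcases le_or_gt b a with h | h
  · rw [Ioo_eq_empty (by exact fun hh => absurd hh (not_lt.mpr h))]
    simp
  · have := (intervalIntegral.intervalIntegrable_rpow' (a := a) (b := b) hβ)
    rw [intervalIntegrable_iff_integrableOn_Ioc_of_le h.le] at this
    exact this.mono_set Ioo_subset_Ioc_self

lemma setIntegral_Ioo_eq_intervalIntegral {a b : ℝ} (hab : a ≤ b) (f : ℝ → ℝ) :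
    ∫ x in Ioo a b, f x = ∫ x in a..b, f x := by
  rw [intervalIntegral.integral_of_le hab, integral_Ioc_eq_integral_Ioo]

/-- integrability of τ ↦ (u - τ)^β on Ioo a c with c ≤ u, β > -1 -/
lemma integrableOn_sub_rpow {β u a c : ℝ} (hβ : -1 < β) (hcu : c ≤ u) :
    IntegrableOn (fun τ : ℝ => (u - τ) ^ β) (Ioo a c) := by
  rcases le_or_gt c a with h | h
  · rw [Ioo_eq_empty (by exact fun hh => absurd hh (not_lt.mpr h))]; simp
  · have h0 := (intervalIntegral.intervalIntegrable_rpow' (a := u - a) (b := u - c) hβ)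
    have h1 := h0.comp_sub_left u
    simp only [sub_sub_cancel] at h1
    rw [intervalIntegrable_iff_integrableOn_Ioc_of_le h.le] at h1
    exact h1.mono_set Ioo_subset_Ioc_self

/-- integrability of y ↦ (y - x)^β on Ioo x r, β > -1 -/
lemma integrableOn_rpow_sub {β x r : ℝ} (hβ : -1 < β) :
    IntegrableOn (fun y : ℝ => (y - x) ^ β) (Ioo x r) := by
  rcases le_or_gt r x with h | h
  · rw [Ioo_eq_empty (by exact fun hh => absurd hh (not_lt.mpr h))]; simp
  · have h0 := (intervalIntegral.intervalIntegrable_rpow' (a := (0:ℝ)) (b := r - x) hβ)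
    have h1 := h0.comp_sub_right x
    simp only [zero_add, sub_add_cancel] at h1
    rw [intervalIntegrable_iff_integrableOn_Ioc_of_le h.le] at h1
    exact h1.mono_set Ioo_subset_Ioc_self

lemma ker_gen {α a c u : ℝ} (hα1 : α < 1) (hac : a ≤ c) (hcu : c ≤ u) :
    ∫ y in Ioo a c, (u - y) ^ (-α) = ((u - a) ^ (1 - α) - (u - c) ^ (1 - α)) / (1 - α) := by
  rw [setIntegral_Ioo_eq_intervalIntegral hac]
  rw [intervalIntegral.integral_comp_sub_left (fun s => s ^ (-α)) u]
  rw [integral_rpow (Or.inl (by linarith))]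
  rw [show -α + 1 = 1 - α by ring]

lemma ker_sub_right {α x r : ℝ} (hα1 : α < 1) (hxr : x ≤ r) :
    ∫ y in Ioo x r, (r - y) ^ (-α) = (r - x) ^ (1 - α) / (1 - α) := by
  rw [ker_gen hα1 hxr le_rfl, sub_self, Real.zero_rpow (by linarith), sub_zero]

lemma ker_sub_left {α x r : ℝ} (hα1 : α < 1) (hxr : x ≤ r) :
    ∫ y in Ioo x r, (y - x) ^ (-α) = (r - x) ^ (1 - α) / (1 - α) := by
  rw [setIntegral_Ioo_eq_intervalIntegral hxr]
  rw [intervalIntegral.integral_comp_sub_right (fun u => u ^ (-α)) x]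
  rw [sub_self]
  rw [integral_rpow (Or.inl (by linarith))]
  rw [Real.zero_rpow (by linarith)]
  rw [show -α + 1 = 1 - α by ring]
  ring

lemma ker_pow_neg {α x t : ℝ} (hα : 0 < α) (hx : 0 < x) (hxt : x ≤ t) :
    ∫ s in Ioo x t, s ^ (-α - 1) = (x ^ (-α) - t ^ (-α)) / α := by
  rw [setIntegral_Ioo_eq_intervalIntegral hxt]
  rw [integral_rpow (Or.inr ⟨by intro h; nlinarith, by
      rw [Set.uIcc_of_le hxt]; exact fun h => absurd h.1 (not_le.mpr hx)⟩)]
  rw [show -α - 1 + 1 = -α by ring]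
  rw [div_neg, ← neg_div, neg_sub]

/-- continuous times integrable on bounded interval is integrable -/
lemma cont_mul_integrableOn {ψ κ : ℝ → ℝ} (hψ : Continuous ψ) {a c : ℝ}
    (hκ : IntegrableOn κ (Ioo a c)) :
    IntegrableOn (fun x => ψ x * κ x) (Ioo a c) := by
  rcases le_or_gt c a with h | h
  · rw [Ioo_eq_empty (by exact fun hh => absurd hh (not_lt.mpr h))]; simp
  obtain ⟨C, hC⟩ := (isCompact_Icc (a := a) (b := c)).exists_bound_of_continuousOn
    hψ.continuousOn
  refine Integrable.mono' (hκ.norm.const_mul C)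
    ((hψ.aestronglyMeasurable.restrict).mul hκ.1) ?_
  filter_upwards [ae_restrict_mem measurableSet_Ioo] with x hx
  rw [Real.norm_eq_abs, abs_mul]
  apply mul_le_mul_of_nonneg_right _ (abs_nonneg _)
  simpa [Real.norm_eq_abs] using hC x ⟨hx.1.le, hx.2.le⟩

lemma tri_swap {r : ℝ} (f : ℝ → ℝ → ℝ)
    (hi : Integrable (fun p : ℝ × ℝ => if p.1 < p.2 then f p.1 p.2 else 0)
          ((volume.restrict (Ioo 0 r)).prod (volume.restrict (Ioo 0 r)))) :
    ∫ y in Ioo (0:ℝ) r, ∫ x in Ioo (0:ℝ) y, f x y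
      = ∫ x in Ioo (0:ℝ) r, ∫ y in Ioo x r, f x y := by
  have h1 : ∀ y ∈ Ioo (0:ℝ) r,
      ∫ x in Ioo (0:ℝ) y, f x y
        = ∫ x in Ioo (0:ℝ) r, (if x < y then f x y else 0) := by
    intro y hy
    have : (fun x => if x < y then f x y else 0)
        = (Iio y).indicator (fun x => f x y) := by
      funext x; simp [Set.indicator_apply]
    have hset : Iio y ∩ Ioo 0 r = Ioo 0 y := by
      ext z
      simp only [mem_inter_iff, mem_Iio, mem_Ioo]
      constructor
      · rintro ⟨h1, h2, h3⟩; exact ⟨h2, h1⟩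
      · rintro ⟨h1, h2⟩; exact ⟨h2, h1, lt_of_lt_of_le h2 hy.2.le⟩
    rw [this, integral_indicator measurableSet_Iio,
      Measure.restrict_restrict measurableSet_Iio, hset]
  have h2 : ∀ x ∈ Ioo (0:ℝ) r,
      ∫ y in Ioo x r, f x y
        = ∫ y in Ioo (0:ℝ) r, (if x < y then f x y else 0) := by
    intro x hx
    have : (fun y => if x < y then f x y else 0)
        = (Ioi x).indicator (fun y => f x y) := by
      funext y; simp [Set.indicator_apply]
    have hset : Ioi x ∩ Ioo 0 r = Ioo x r := by
      ext z
      simp only [mem_inter_iff, mem_Ioi, mem_Ioo]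
      constructor
      · rintro ⟨h1, h2, h3⟩; exact ⟨h1, h3⟩
      · rintro ⟨h1, h2⟩; exact ⟨h1, lt_trans hx.1 h1, h2⟩
    rw [this, integral_indicator measurableSet_Ioi,
      Measure.restrict_restrict measurableSet_Ioi, hset]
  rw [setIntegral_congr_fun measurableSet_Ioo h1,
    setIntegral_congr_fun measurableSet_Ioo fun x hx => (h2 x hx)]
  exact integral_integral_swap hi.swap

lemma tri_integrable {r : ℝ} (hr : 0 < r) {φ : ℝ → ℝ} (hφ : Continuous φ)
    {k : ℝ × ℝ → ℝ} (hk : Measurable k)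
    {b : ℝ → ℝ} (hb : IntegrableOn b (Ioo 0 r))
    (hslice : ∀ x ∈ Ioo (0:ℝ) r, IntegrableOn (fun y => k (x, y)) (Ioo x r))
    (hbnd : ∀ x ∈ Ioo (0:ℝ) r, (∫ y in Ioo x r, |k (x, y)|) ≤ b x) :
    Integrable (fun p : ℝ × ℝ => if p.1 < p.2 then φ p.1 * k p else 0)
      ((volume.restrict (Ioo 0 r)).prod (volume.restrict (Ioo 0 r))) := by
  obtain ⟨C, hC⟩ := (isCompact_Icc (a := (0:ℝ)) (b := r)).exists_bound_of_continuousOn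
    hφ.continuousOn
  have hmeas : Measurable (fun p : ℝ × ℝ => if p.1 < p.2 then φ p.1 * k p else 0) := by
    have hs : MeasurableSet {p : ℝ × ℝ | p.1 < p.2} :=
      measurableSet_lt measurable_fst measurable_snd
    have : (fun p : ℝ × ℝ => if p.1 < p.2 then φ p.1 * k p else 0)
        = Set.indicator {p : ℝ × ℝ | p.1 < p.2} (fun p => φ p.1 * k p) := by
      funext p; simp [Set.indicator_apply, Set.mem_setOf_eq]
    rw [this]
    exact ((hφ.measurable.comp measurable_fst).mul hk).indicator hs
  rw [integrable_prod_iff hmeas.aestronglyMeasurable]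
  constructor
  · filter_upwards [ae_restrict_mem measurableSet_Ioo] with x hx
    have hind : (fun y => if x < y then φ x * k (x, y) else 0)
        = (Ioi x).indicator (fun y => φ x * k (x, y)) := by
      funext y; simp [Set.indicator_apply]
    rw [hind]
    rw [integrable_indicator_iff measurableSet_Ioi]
    rw [IntegrableOn, Measure.restrict_restrict measurableSet_Ioi]
    have hset : Ioi x ∩ Ioo 0 r = Ioo x r := by
      ext z; simp only [mem_inter_iff, mem_Ioi, mem_Ioo]
      exact ⟨fun ⟨h1, _, h3⟩ => ⟨h1, h3⟩, fun ⟨h1, h2⟩ => ⟨h1, lt_trans hx.1 h1, h2⟩⟩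
    rw [hset]
    exact (hslice x hx).const_mul _
  · have hmeasnorm : AEStronglyMeasurable
        (fun x => ∫ y, ‖if x < y then φ x * k (x, y) else 0‖ ∂(volume.restrict (Ioo 0 r)))
        (volume.restrict (Ioo 0 r)) :=
      (hmeas.aestronglyMeasurable.norm).integral_prod_right'
    refine Integrable.mono' (hb.const_mul C) hmeasnorm ?_
    filter_upwards [ae_restrict_mem measurableSet_Ioo] with x hx
    have hset : Ioi x ∩ Ioo 0 r = Ioo x r := by
      ext z; simp only [mem_inter_iff, mem_Ioi, mem_Ioo]
      exact ⟨fun ⟨h1, _, h3⟩ => ⟨h1, h3⟩, fun ⟨h1, h2⟩ => ⟨h1, lt_trans hx.1 h1, h2⟩⟩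
    have heq : ∫ y, ‖if x < y then φ x * k (x, y) else 0‖ ∂(volume.restrict (Ioo 0 r))
        = ∫ y in Ioo x r, |φ x| * |k (x, y)| := by
      have hind : (fun y => ‖if x < y then φ x * k (x, y) else 0‖)
          = (Ioi x).indicator (fun y => |φ x| * |k (x, y)|) := by
        funext y
        by_cases h : x < y <;> simp [Set.indicator_apply, h, abs_mul, Real.norm_eq_abs]
      rw [hind, integral_indicator measurableSet_Ioi,
        Measure.restrict_restrict measurableSet_Ioi, hset]
    rw [Real.norm_eq_abs, heq, integral_const_mul]
    have h1 : |φ x| * ∫ y in Ioo x r, |k (x, y)| ≤ C * ∫ y in Ioo x r, |k (x, y)| := by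
      apply mul_le_mul_of_nonneg_right
      · simpa [Real.norm_eq_abs] using hC x ⟨hx.1.le, hx.2.le⟩
      · exact integral_nonneg fun y => abs_nonneg _
    have h2 : C * ∫ y in Ioo x r, |k (x, y)| ≤ C * b x := by
      apply mul_le_mul_of_nonneg_left (hbnd x hx)
      calc (0:ℝ) ≤ |φ 0| := abs_nonneg _
        _ ≤ C := by simpa [Real.norm_eq_abs] using hC 0 ⟨le_refl 0, hr.le⟩
    have h0 : 0 ≤ |φ x| * ∫ y in Ioo x r, |k (x, y)| :=
      mul_nonneg (abs_nonneg _) (integral_nonneg fun y => abs_nonneg _)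
    rw [abs_of_nonneg h0]
    exact le_trans h1 h2

end helpers

/-- For `0 < α < 1` and `v` continuously differentiable on `[0,∞)` with
`v(0) = 0`, the fractional integral `F(t) = ∫₀^t v(τ)(t-τ)^{-α} dτ` is differentiable at
every `t > 0` with `F'(t) = v(t) t^{-α} − α ∫₀^t (v(t-s) − v(t)) s^{-α-1} ds`. -/
theorem stmt_14 (α : ℝ) (hα : α ∈ Set.Ioo (0:ℝ) 1)
    (v : ℝ → ℝ) (hv : ContDiffOn ℝ 1 v (Set.Ici 0)) (hv0 : v 0 = 0) :
    ∀ t > (0:ℝ),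
      HasDerivAt (fun r => ∫ τ in Set.Ioo (0:ℝ) r, v τ * (r - τ) ^ (-α))
        (v t * t ^ (-α) - α * ∫ s in Set.Ioo (0:ℝ) t, (v (t - s) - v t) * s ^ (-α - 1))
        t := by
  obtain ⟨hα0, hα1⟩ := hα
  intro t ht
  set w : ℝ → ℝ := fun x => derivWithin v (Ici 0) (max x 0) with hw_def
  have hwc : ContinuousOn (derivWithin v (Ici 0)) (Ici 0) :=
    hv.continuousOn_derivWithin (uniqueDiffOn_Ici 0) le_rfl
  have hw : Continuous w :=
    hwc.comp_continuous (continuous_id.max continuous_const) (fun x => mem_Ici.2 (le_max_right _ _))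

  have hFTC2 : ∀ τ : ℝ, 0 ≤ τ → v τ = ∫ x in Ioo (0:ℝ) τ, w x := by
    intro τ hτ
    have hcont : ContinuousOn v (Icc 0 τ) :=
      (hv.continuousOn).mono (fun x hx => hx.1)
    have hderiv : ∀ x ∈ Ioo (0:ℝ) τ, HasDerivWithinAt v (w x) (Ioi x) x := by
      intro x hx
      have hx0 : (0:ℝ) < x := hx.1
      have hmem : Ici (0:ℝ) ∈ nhds x := Ici_mem_nhds hx0
      have hdiff : DifferentiableAt ℝ v x :=
        ((hv.differentiableOn one_ne_zero) x (le_of_lt hx0)).differentiableAt hmem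
      have hwx : w x = deriv v x := by
        rw [hw_def]
        simp only [max_eq_left (le_of_lt hx0)]
        exact derivWithin_of_mem_nhds hmem
      rw [hwx]
      exact hdiff.hasDerivAt.hasDerivWithinAt
    have hint : IntervalIntegrable w volume 0 τ := hw.intervalIntegrable 0 τ
    have := intervalIntegral.integral_eq_sub_of_hasDeriv_right_of_le hτ hcont hderiv hint
    rw [setIntegral_Ioo_eq_intervalIntegral hτ, this, hv0, sub_zero]

  set g : ℝ → ℝ := fun u => ∫ τ in Ioo (0:ℝ) u, w τ * (u - τ) ^ (-α) with hg_def

  have hFa : ∀ r : ℝ, 0 < r →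
      (∫ τ in Ioo (0:ℝ) r, v τ * (r - τ) ^ (-α))
        = ∫ x in Ioo (0:ℝ) r, w x * ((r - x) ^ (1 - α) / (1 - α)) := by
    intro r hr
    have hint : Integrable
        (fun p : ℝ × ℝ => if p.1 < p.2 then w p.1 * (r - p.2) ^ (-α) else 0)
        ((volume.restrict (Ioo 0 r)).prod (volume.restrict (Ioo 0 r))) := by
      apply tri_integrable hr hw
        ((measurable_const.sub measurable_snd).pow measurable_const)
        (integrableOn_const measure_Ioo_lt_top.ne) (b := fun _ => r ^ (1 - α) / (1 - α))
      · intro x hx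
        exact integrableOn_sub_rpow (by linarith) le_rfl
      · intro x hx
        have habs : ∀ y ∈ Ioo x r, |(r - y) ^ (-α)| = (r - y) ^ (-α) := by
          intro y hy
          exact abs_of_nonneg (Real.rpow_nonneg (by linarith [hy.2]) _)
        show ∫ y in Ioo x r, |(r - y) ^ (-α)| ≤ _
        rw [setIntegral_congr_fun measurableSet_Ioo habs, ker_sub_right hα1 hx.2.le]
        gcongr <;> linarith [hx.1, hx.2]
    have h1 : ∀ τ ∈ Ioo (0:ℝ) r,
        v τ * (r - τ) ^ (-α) = ∫ x in Ioo (0:ℝ) τ, w x * (r - τ) ^ (-α) := by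
      intro τ hτ
      rw [hFTC2 τ hτ.1.le, integral_mul_const]
    rw [setIntegral_congr_fun measurableSet_Ioo h1,
      tri_swap (fun x τ => w x * (r - τ) ^ (-α)) hint]
    apply setIntegral_congr_fun measurableSet_Ioo
    intro x hx
    dsimp only
    rw [integral_const_mul, ker_sub_right hα1 hx.2.le]

  have hFb : ∀ r : ℝ, 0 < r →
      (∫ u in Ioo (0:ℝ) r, g u)
        = ∫ x in Ioo (0:ℝ) r, w x * ((r - x) ^ (1 - α) / (1 - α)) := by
    intro r hr
    simp only [hg_def]
    have hint : Integrable
        (fun p : ℝ × ℝ => if p.1 < p.2 then w p.1 * (p.2 - p.1) ^ (-α) else 0)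
        ((volume.restrict (Ioo 0 r)).prod (volume.restrict (Ioo 0 r))) := by
      apply tri_integrable hr hw
        ((measurable_snd.sub measurable_fst).pow measurable_const)
        (integrableOn_const measure_Ioo_lt_top.ne) (b := fun _ => r ^ (1 - α) / (1 - α))
      · intro x hx
        exact integrableOn_rpow_sub (by linarith)
      · intro x hx
        have habs : ∀ y ∈ Ioo x r, |(y - x) ^ (-α)| = (y - x) ^ (-α) := by
          intro y hy
          exact abs_of_nonneg (Real.rpow_nonneg (by linarith [hy.1]) _)
        show ∫ y in Ioo x r, |(y - x) ^ (-α)| ≤ _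
        rw [setIntegral_congr_fun measurableSet_Ioo habs, ker_sub_left hα1 hx.2.le]
        gcongr <;> linarith [hx.1, hx.2]
    rw [tri_swap (fun τ u => w τ * (u - τ) ^ (-α)) hint]
    apply setIntegral_congr_fun measurableSet_Ioo
    intro x hx
    dsimp only
    rw [integral_const_mul, ker_sub_left hα1 hx.2.le]

  set T : ℝ := t + 1 with hT_def
  have hT : t < T := by simp [hT_def]
  obtain ⟨C, hC⟩ := (isCompact_Icc (a := (0:ℝ)) (b := T)).exists_bound_of_continuousOn
    hw.continuousOn
  have hC0 : 0 ≤ C := le_trans (norm_nonneg _) (hC 0 ⟨le_refl 0, by linarith⟩)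

  have hHolder : ∀ u' u : ℝ, 0 ≤ u' → u' ≤ u → u ≤ T →
      |g u - g u'| ≤ (2 * C / (1 - α)) * (u - u') ^ (1 - α) := by
    intro u' u h0 h1 h2
    have hα1' : (0:ℝ) < 1 - α := by linarith
    have hIoo : ∀ a c uu : ℝ, c ≤ uu →
        IntegrableOn (fun τ => w τ * (uu - τ) ^ (-α)) (Ioo a c) := fun a c uu hcu =>
      cont_mul_integrableOn hw (integrableOn_sub_rpow (by linarith) hcu)
    have hII : ∀ a c uu : ℝ, a ≤ c → c ≤ uu →
        IntervalIntegrable (fun τ => w τ * (uu - τ) ^ (-α)) volume a c := by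
      intro a c uu hac hcu
      rw [intervalIntegrable_iff_integrableOn_Ioc_of_le hac, IntegrableOn,
        ← Measure.restrict_congr_set Ioo_ae_eq_Ioc]
      exact hIoo a c uu hcu
    have hgu : g u = (∫ τ in (0:ℝ)..u', w τ * (u - τ) ^ (-α))
        + ∫ τ in u'..u, w τ * (u - τ) ^ (-α) := by
      rw [hg_def]
      dsimp only
      rw [setIntegral_Ioo_eq_intervalIntegral (by linarith),
        ← intervalIntegral.integral_add_adjacent_intervals (hII 0 u' u h0 (by linarith))
          (hII u' u u h1 le_rfl)]
    have hgu' : g u' = ∫ τ in (0:ℝ)..u', w τ * (u' - τ) ^ (-α) := by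
      rw [hg_def]
      dsimp only
      rw [setIntegral_Ioo_eq_intervalIntegral h0]
    have hsub : g u - g u'
        = (∫ τ in (0:ℝ)..u', w τ * ((u - τ) ^ (-α) - (u' - τ) ^ (-α)))
          + ∫ τ in u'..u, w τ * (u - τ) ^ (-α) := by
      have hfe : (fun τ => w τ * ((u - τ) ^ (-α) - (u' - τ) ^ (-α)))
          = fun τ => w τ * (u - τ) ^ (-α) - w τ * (u' - τ) ^ (-α) := by
        funext τ; ring
      rw [hgu, hgu', hfe,
        intervalIntegral.integral_sub (hII 0 u' u h0 (by linarith)) (hII 0 u' u' h0 le_rfl)]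
      ring
    -- bound the first piece
    have hA : |∫ τ in (0:ℝ)..u', w τ * ((u - τ) ^ (-α) - (u' - τ) ^ (-α))|
        ≤ C * (u - u') ^ (1 - α) / (1 - α) := by
      rw [← setIntegral_Ioo_eq_intervalIntegral h0]
      have hIA : IntegrableOn (fun τ => w τ * ((u - τ) ^ (-α) - (u' - τ) ^ (-α))) (Ioo 0 u') :=
        cont_mul_integrableOn hw ((integrableOn_sub_rpow (by linarith) h1).sub
          (integrableOn_sub_rpow (by linarith) le_rfl))
      have hIB : IntegrableOn (fun τ => (u' - τ) ^ (-α) - (u - τ) ^ (-α)) (Ioo 0 u') :=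
        (integrableOn_sub_rpow (by linarith) le_rfl).sub
          (integrableOn_sub_rpow (by linarith) h1)
      calc |∫ τ in Ioo (0:ℝ) u', w τ * ((u - τ) ^ (-α) - (u' - τ) ^ (-α))|
          = ‖∫ τ in Ioo (0:ℝ) u', w τ * ((u - τ) ^ (-α) - (u' - τ) ^ (-α))‖ :=
            (Real.norm_eq_abs _).symm
        _ ≤ ∫ τ in Ioo (0:ℝ) u', ‖w τ * ((u - τ) ^ (-α) - (u' - τ) ^ (-α))‖ :=
            norm_integral_le_integral_norm _
        _ ≤ ∫ τ in Ioo (0:ℝ) u', C * ((u' - τ) ^ (-α) - (u - τ) ^ (-α)) := by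
            apply setIntegral_mono_on hIA.norm (hIB.const_mul C) measurableSet_Ioo
            intro τ hτ
            have hτ1 : (0:ℝ) < u' - τ := by linarith [hτ.2]
            have hXY : (u - τ) ^ (-α) ≤ (u' - τ) ^ (-α) :=
              Real.rpow_le_rpow_of_nonpos hτ1 (by linarith) (by linarith)
            have habs2 : |(u - τ) ^ (-α) - (u' - τ) ^ (-α)|
                = (u' - τ) ^ (-α) - (u - τ) ^ (-α) := by
              rw [abs_sub_comm]; exact abs_of_nonneg (by linarith)
            rw [Real.norm_eq_abs, abs_mul, habs2]
            apply mul_le_mul_of_nonneg_right _ (by linarith : (0:ℝ) ≤ (u' - τ) ^ (-α) - (u - τ) ^ (-α))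
            simpa [Real.norm_eq_abs] using hC τ ⟨hτ.1.le, by linarith [hτ.2]⟩
        _ = C * ((∫ τ in Ioo (0:ℝ) u', (u' - τ) ^ (-α)) - ∫ τ in Ioo (0:ℝ) u', (u - τ) ^ (-α)) := by
            rw [integral_const_mul, integral_sub (integrableOn_sub_rpow (by linarith) le_rfl)
              (integrableOn_sub_rpow (by linarith) h1)]
        _ ≤ C * (u - u') ^ (1 - α) / (1 - α) := by
            rw [ker_sub_right hα1 h0, ker_gen hα1 h0 (by linarith)]
            have hmono : u' ^ (1 - α) ≤ u ^ (1 - α) :=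
              Real.rpow_le_rpow h0 h1 (by linarith)
            rw [sub_zero, sub_zero, div_sub_div_same, mul_div_assoc]
            apply mul_le_mul_of_nonneg_left _ hC0
            apply (div_le_div_iff_of_pos_right hα1').mpr
            linarith
    have hB : |∫ τ in u'..u, w τ * (u - τ) ^ (-α)| ≤ C * (u - u') ^ (1 - α) / (1 - α) := by
      rw [← setIntegral_Ioo_eq_intervalIntegral h1]
      calc |∫ τ in Ioo u' u, w τ * (u - τ) ^ (-α)|
          = ‖∫ τ in Ioo u' u, w τ * (u - τ) ^ (-α)‖ := (Real.norm_eq_abs _).symm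
        _ ≤ ∫ τ in Ioo u' u, ‖w τ * (u - τ) ^ (-α)‖ := norm_integral_le_integral_norm _
        _ ≤ ∫ τ in Ioo u' u, C * (u - τ) ^ (-α) := by
            apply setIntegral_mono_on (hIoo u' u u le_rfl).norm
              ((integrableOn_sub_rpow (by linarith) le_rfl).const_mul C) measurableSet_Ioo
            intro τ hτ
            have hτ1 : (0:ℝ) < u - τ := by linarith [hτ.2]
            rw [Real.norm_eq_abs, abs_mul, abs_of_nonneg (Real.rpow_nonneg hτ1.le _)]
            apply mul_le_mul_of_nonneg_right _ (Real.rpow_nonneg hτ1.le _)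
            simpa [Real.norm_eq_abs] using hC τ ⟨by linarith [hτ.1], by linarith [hτ.2]⟩
        _ = C * ((u - u') ^ (1 - α) / (1 - α)) := by
            rw [integral_const_mul, ker_sub_right hα1 h1]
        _ ≤ C * (u - u') ^ (1 - α) / (1 - α) := by rw [mul_div_assoc]
    calc |g u - g u'| ≤ |∫ τ in (0:ℝ)..u', w τ * ((u - τ) ^ (-α) - (u' - τ) ^ (-α))|
          + |∫ τ in u'..u, w τ * (u - τ) ^ (-α)| := by rw [hsub]; exact abs_add_le _ _
      _ ≤ C * (u - u') ^ (1 - α) / (1 - α) + C * (u - u') ^ (1 - α) / (1 - α) := add_le_add hA hB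
      _ = (2 * C / (1 - α)) * (u - u') ^ (1 - α) := by ring

  have hK0 : (0:ℝ) ≤ 2 * C / (1 - α) := div_nonneg (by linarith) (by linarith)
  have hgcont : ContinuousOn g (Icc 0 T) := by
    have hα1' : (0:ℝ) < 1 - α := by linarith
    have hKey : ∀ x ∈ Icc (0:ℝ) T, ∀ y ∈ Icc (0:ℝ) T,
        |g y - g x| ≤ (2 * C / (1 - α)) * |y - x| ^ (1 - α) := by
      intro x hx y hy
      rcases le_total x y with h | h
      · rw [abs_of_nonneg (sub_nonneg.2 h)]
        exact hHolder x y hx.1 h hy.2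
      · rw [abs_sub_comm (g y), abs_sub_comm y x, abs_of_nonneg (sub_nonneg.2 h)]
        exact hHolder y x hy.1 h hx.2
    intro x hx
    rw [Metric.continuousWithinAt_iff]
    intro ε hε
    refine ⟨(ε / (2 * C / (1 - α) + 1)) ^ (1 - α)⁻¹, Real.rpow_pos_of_pos (by positivity) _, ?_⟩
    intro y hy hd
    rw [Real.dist_eq] at hd ⊢
    calc |g y - g x| ≤ (2 * C / (1 - α)) * |y - x| ^ (1 - α) := hKey x hx y hy
      _ ≤ (2 * C / (1 - α)) * ((ε / (2 * C / (1 - α) + 1)) ^ (1 - α)⁻¹) ^ (1 - α) := by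
          apply mul_le_mul_of_nonneg_left _ hK0
          exact Real.rpow_le_rpow (abs_nonneg _) hd.le hα1'.le
      _ = (2 * C / (1 - α)) * (ε / (2 * C / (1 - α) + 1)) := by
          rw [Real.rpow_inv_rpow (by positivity) (ne_of_gt hα1')]
      _ < ε := by
          rw [mul_div_assoc']  -- (2 * C / (1 - α)) * ε / (K+1)
          rw [div_lt_iff₀ (by linarith)]
          nlinarith

  have hD : HasDerivAt (fun r => ∫ u in (0:ℝ)..r, g u) (g t) t := by
    apply intervalIntegral.integral_hasDerivAt_right
    · exact (hgcont.mono (by rw [uIcc_of_le ht.le]; exact Icc_subset_Icc le_rfl hT.le)).intervalIntegrable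
    · exact ⟨Icc 0 T, Icc_mem_nhds ht hT, hgcont.aestronglyMeasurable measurableSet_Icc⟩
    · exact hgcont.continuousAt (Icc_mem_nhds ht hT)

  have hval : g t = v t * t ^ (-α) - α * ∫ s in Ioo (0:ℝ) t, (v (t - s) - v t) * s ^ (-α - 1) := by
    have hwcomp : Continuous (fun u : ℝ => w (t - u)) :=
      hw.comp (continuous_const.sub continuous_id)
    set A : ℝ := ∫ u in Ioo (0:ℝ) t, w (t - u) * u ^ (-α) with hA_def
    -- g t = A
    have hgt : g t = A := by
      rw [hg_def, hA_def]
      dsimp only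
      rw [setIntegral_Ioo_eq_intervalIntegral ht.le, setIntegral_Ioo_eq_intervalIntegral ht.le]
      have := intervalIntegral.integral_comp_sub_left
        (fun s => w (t - s) * s ^ (-α)) t (a := 0) (b := t)
      simp only [sub_self, sub_zero] at this
      rw [← this]
      congr 1
      funext τ
      rw [sub_sub_cancel]
    -- B = v t
    have hB : (∫ u in Ioo (0:ℝ) t, w (t - u)) = v t := by
      rw [setIntegral_Ioo_eq_intervalIntegral ht.le]
      have := intervalIntegral.integral_comp_sub_left w t (a := 0) (b := t)
      simp only [sub_self, sub_zero] at this
      rw [this, ← setIntegral_Ioo_eq_intervalIntegral ht.le, ← hFTC2 t ht.le]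
    -- difference formula
    have hdiff : ∀ s ∈ Ioo (0:ℝ) t,
        v (t - s) - v t = -∫ u in Ioo (0:ℝ) s, w (t - u) := by
      intro s hs
      have hws : IntervalIntegrable w volume 0 (t - s) := hw.intervalIntegrable _ _
      have hws2 : IntervalIntegrable w volume (t - s) t := hw.intervalIntegrable _ _
      have hadj := intervalIntegral.integral_add_adjacent_intervals hws hws2
      have hv1 : v (t - s) = ∫ x in (0:ℝ)..(t - s), w x := by
        rw [hFTC2 (t - s) (by linarith [hs.2]), setIntegral_Ioo_eq_intervalIntegral (by linarith [hs.2])]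
      have hv2 : v t = ∫ x in (0:ℝ)..t, w x := by
        rw [hFTC2 t ht.le, setIntegral_Ioo_eq_intervalIntegral ht.le]
      have hcs := intervalIntegral.integral_comp_sub_left w t (a := 0) (b := s)
      simp only [sub_zero] at hcs
      rw [setIntegral_Ioo_eq_intervalIntegral hs.1.le, hcs, hv1, hv2, ← hadj]
      ring
    -- rewrite the target integral
    have hstep1 : (∫ s in Ioo (0:ℝ) t, (v (t - s) - v t) * s ^ (-α - 1))
        = -∫ s in Ioo (0:ℝ) t, ∫ u in Ioo (0:ℝ) s, w (t - u) * s ^ (-α - 1) := by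
      rw [← integral_neg]
      apply setIntegral_congr_fun measurableSet_Ioo
      intro s hs
      dsimp only
      rw [hdiff s hs, integral_mul_const]
      ring
    -- Fubini (c)
    have hint : Integrable
        (fun p : ℝ × ℝ => if p.1 < p.2 then w (t - p.1) * p.2 ^ (-α - 1) else 0)
        ((volume.restrict (Ioo 0 t)).prod (volume.restrict (Ioo 0 t))) := by
      apply tri_integrable ht hwcomp (measurable_snd.pow measurable_const)
        ((integrableOn_rpow_Ioo (by linarith) 0 t).div_const α) (b := fun x => x ^ (-α) / α)
      · intro x hx
        have hcont : ContinuousOn (fun y : ℝ => y ^ (-α - 1)) (Icc x t) := by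
          intro y hy
          exact (Real.continuousAt_rpow_const y _
            (Or.inl (ne_of_gt (lt_of_lt_of_le hx.1 hy.1)))).continuousWithinAt
        exact (hcont.integrableOn_Icc).mono_set Ioo_subset_Icc_self
      · intro x hx
        have habs : ∀ y ∈ Ioo x t, |y ^ (-α - 1)| = y ^ (-α - 1) := by
          intro y hy
          exact abs_of_nonneg (Real.rpow_nonneg (by linarith [hx.1, hy.1]) _)
        rw [setIntegral_congr_fun measurableSet_Ioo habs, ker_pow_neg hα0 hx.1 hx.2.le]
        apply (div_le_div_iff_of_pos_right hα0).mpr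
        linarith [Real.rpow_nonneg ht.le (-α)]
    have hstep2 : (∫ s in Ioo (0:ℝ) t, ∫ u in Ioo (0:ℝ) s, w (t - u) * s ^ (-α - 1))
        = ∫ u in Ioo (0:ℝ) t, w (t - u) * ((u ^ (-α) - t ^ (-α)) / α) := by
      rw [tri_swap (fun u s => w (t - u) * s ^ (-α - 1)) hint]
      apply setIntegral_congr_fun measurableSet_Ioo
      intro x hx
      dsimp only
      rw [integral_const_mul, ker_pow_neg hα0 hx.1 hx.2.le]
    -- split the integral
    have hIA : IntegrableOn (fun u => w (t - u) * u ^ (-α)) (Ioo 0 t) :=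
      cont_mul_integrableOn hwcomp (integrableOn_rpow_Ioo (by linarith) 0 t)
    have hIB : IntegrableOn (fun u : ℝ => w (t - u)) (Ioo 0 t) :=
      (hwcomp.continuousOn.integrableOn_Icc).mono_set Ioo_subset_Icc_self
    have hstep3 : (∫ u in Ioo (0:ℝ) t, w (t - u) * ((u ^ (-α) - t ^ (-α)) / α))
        = (1 / α) * A - (t ^ (-α) / α) * v t := by
      have hfe : (fun u => w (t - u) * ((u ^ (-α) - t ^ (-α)) / α))
          = fun u => (1 / α) * (w (t - u) * u ^ (-α)) - (t ^ (-α) / α) * w (t - u) := by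
        funext u
        field_simp
      rw [hfe, integral_sub (hIA.const_mul _) (hIB.const_mul _),
        integral_const_mul, integral_const_mul, hB, ← hA_def]
    rw [hgt, hstep1, hstep2, hstep3]
    field_simp
    ring

  rw [← hval]
  apply hD.congr_of_eventuallyEq
  filter_upwards [Ioi_mem_nhds ht] with r hr
  rw [hFa r hr, ← hFb r hr, setIntegral_Ioo_eq_intervalIntegral (le_of_lt hr)]
end

section
/- Let 0 < α < 1 and let v : [0,∞) → ℝ be continuously differentiable with v(0) = 0. Then for every t > 0, (1/2) · d/dt ∫₀^t v(τ)² (t-τ)^{-α} dτ + v(t)² / (2 t^α) + (α/2) ∫₀^t (v(τ) − v(t))² (t-τ)^{-α-1} dτ = v(t) · d/dt ∫₀^t v(τ) (t-τ)^{-α} dτ, where both fractional integrals t ↦ ∫₀^t v(τ)(t-τ)^{-α} dτ and t ↦ ∫₀^t v(τ)²(t-τ)^{-α} dτ are differentiable at every t > 0. -/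
set_option maxHeartbeats 1000000

open MeasureTheory Real Set Filter Topology


/-- integrability of `s ↦ (b - s)^p` on `a..b` for `p > -1`. -/
lemma ii_rpow_sub {p : ℝ} (hp : -1 < p) (a b : ℝ) :
    IntervalIntegrable (fun s => (b - s) ^ p) volume a b := by
  have h := (intervalIntegral.intervalIntegrable_rpow' hp (a := b - a) (b := b - b)).comp_sub_left b
  simpa using h

lemma integrableOn_rpow_sub_s15 {p : ℝ} (hp : -1 < p) {a b : ℝ} (hab : a ≤ b) :
    IntegrableOn (fun s => (b - s) ^ p) (Ioo a b) := by
  have := ii_rpow_sub hp a b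
  rwa [intervalIntegrable_iff_integrableOn_Ioo_of_le hab] at this

lemma integrableOn_rpow_sub' {p : ℝ} (hp : -1 < p) {a b : ℝ} (hab : a ≤ b) :
    IntegrableOn (fun s => (s - a) ^ p) (Ioo a b) := by
  have := (intervalIntegral.intervalIntegrable_rpow' hp (a := a - a) (b := b - a)).comp_sub_right a
  have h2 : IntervalIntegrable (fun s => (s - a) ^ p) volume a b := by simpa using this
  rwa [intervalIntegrable_iff_integrableOn_Ioo_of_le hab] at h2

lemma integral_rpow_sub {p : ℝ} (hp : -1 < p) {a b : ℝ} (hab : a ≤ b) :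
    ∫ s in Ioo a b, (b - s) ^ p = (b - a) ^ (p + 1) / (p + 1) := by
  have hp1 : p + 1 ≠ 0 := by linarith
  rw [← integral_Ioc_eq_integral_Ioo, ← intervalIntegral.integral_of_le hab]
  rw [intervalIntegral.integral_comp_sub_left (fun x : ℝ => x ^ p) b]
  rw [integral_rpow (Or.inl hp)]
  simp [zero_rpow hp1]

lemma integral_rpow_sub' {p : ℝ} (hp : -1 < p) {a b : ℝ} (hab : a ≤ b) :
    ∫ s in Ioo a b, (s - a) ^ p = (b - a) ^ (p + 1) / (p + 1) := by
  have hp1 : p + 1 ≠ 0 := by linarith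
  rw [← integral_Ioc_eq_integral_Ioo, ← intervalIntegral.integral_of_le hab]
  rw [intervalIntegral.integral_comp_sub_right (fun x : ℝ => x ^ p) a]
  rw [integral_rpow (Or.inl hp)]
  simp [zero_rpow hp1]

/-- product of a bounded a.e.-strongly-measurable function with `(b-s)^p`, `p > -1`,
is integrable on `Ioo a b`. -/
lemma integrableOn_mul_rpow {g : ℝ → ℝ} {a b C p : ℝ} (hab : a ≤ b) (hp : -1 < p)
    (hg : AEStronglyMeasurable g (volume.restrict (Ioo a b)))
    (hC : ∀ s ∈ Ioo a b, |g s| ≤ C) :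
    IntegrableOn (fun s => g s * (b - s) ^ p) (Ioo a b) := by
  have hmeas : AEStronglyMeasurable (fun s => g s * (b - s) ^ p)
      (volume.restrict (Ioo a b)) :=
    hg.mul ((measurable_const.sub measurable_id).pow_const p).aestronglyMeasurable
  refine Integrable.mono' ((integrableOn_rpow_sub_s15 hp hab).const_mul C) hmeas ?_
  filter_upwards [ae_restrict_mem measurableSet_Ioo] with s hs
  have h1 : (0:ℝ) ≤ (b - s) ^ p := rpow_nonneg (by linarith [hs.2]) p
  have : ‖g s * (b - s) ^ p‖ = |g s| * (b - s) ^ p := by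
    rw [norm_mul, Real.norm_eq_abs, Real.norm_eq_abs, abs_of_nonneg h1]
  rw [this]
  exact mul_le_mul_of_nonneg_right (hC s hs) h1

/-- bounded a.e.-strongly measurable functions are integrable on `Ioo a b`. -/
lemma integrableOn_of_bdd {g : ℝ → ℝ} {a b C : ℝ}
    (hg : AEStronglyMeasurable g (volume.restrict (Ioo a b)))
    (hC : ∀ s ∈ Ioo a b, ‖g s‖ ≤ C) :
    IntegrableOn g (Ioo a b) := by
  refine Integrable.mono' (integrableOn_const (C := C) measure_Ioo_lt_top.ne) hg ?_
  filter_upwards [ae_restrict_mem measurableSet_Ioo] with s hs using hC s hs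

variable {α : ℝ}

lemma F_reflect (α : ℝ) (G : ℝ → ℝ) (u : ℝ) :
    ∫ s in Ioo 0 u, G s * (u - s) ^ (-α) = ∫ τ in Ioo 0 u, G (u - τ) * τ ^ (-α) := by
  rcases le_or_gt u 0 with hu | hu
  · rw [Ioo_eq_empty (not_lt.mpr hu),
      Measure.restrict_empty, integral_zero_measure, integral_zero_measure]
  · rw [← integral_Ioc_eq_integral_Ioo, ← intervalIntegral.integral_of_le hu.le,
      ← integral_Ioc_eq_integral_Ioo, ← intervalIntegral.integral_of_le hu.le]
    have h := intervalIntegral.integral_comp_sub_left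
      (a := (0:ℝ)) (b := u) (fun τ => G (u - τ) * τ ^ (-α)) u
    simp only [sub_zero, sub_self] at h
    rw [← h]
    congr 1
    funext x
    congr 2
    ring

lemma F_contAt (hα0 : 0 < α) (hα1 : α < 1) (G : ℝ → ℝ) (hG : Measurable G)
    (hGc : ContinuousOn G (Ioi 0))
    (hGb : ∀ T > 0, ∃ C, 0 ≤ C ∧ ∀ x ∈ Ioc 0 T, |G x| ≤ C)
    {t : ℝ} (ht : 0 < t) :
    ContinuousAt (fun u => ∫ s in Ioo 0 u, G s * (u - s) ^ (-α)) t := by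
  set R := t + 1 with hR
  have hRpos : 0 < R := by linarith
  have htR : t < R := by linarith
  obtain ⟨C, hC0, hC⟩ := hGb R hRpos
  set H : ℝ → ℝ → ℝ := fun x τ => (Ioo 0 x).indicator (fun τ => G (x - τ) * τ ^ (-α)) τ with hH
  have hrpow_int : IntegrableOn (fun s : ℝ => s ^ (-α)) (Ioo 0 R) := by
    have := integrableOn_rpow_sub' (p := -α) (by linarith) hRpos.le
    simpa using this
  have hcont : ContinuousAt (fun x => ∫ τ in Ioo 0 R, H x τ) t := by
    apply continuousAt_of_dominated (bound := fun τ => C * τ ^ (-α))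
    · filter_upwards with x
      exact (((hG.comp (measurable_const.sub measurable_id)).mul
        (measurable_id.pow_const (-α))).indicator measurableSet_Ioo).aestronglyMeasurable
    · filter_upwards [Ioo_mem_nhds ht htR] with x hx
      filter_upwards [ae_restrict_mem measurableSet_Ioo] with τ hτ
      by_cases hmem : τ ∈ Ioo 0 x
      · simp only [hH]
        rw [indicator_of_mem hmem]
        have h1 : (0:ℝ) ≤ τ ^ (-α) := rpow_nonneg hτ.1.le _
        have h2 : x - τ ∈ Ioc 0 R := ⟨by linarith [hmem.2], by linarith [hmem.1, hx.2.le]⟩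
        rw [norm_mul, Real.norm_eq_abs, Real.norm_eq_abs, abs_of_nonneg h1]
        exact mul_le_mul_of_nonneg_right (hC _ h2) h1
      · simp only [hH]
        rw [indicator_of_notMem hmem, norm_zero]
        exact mul_nonneg hC0 (rpow_nonneg hτ.1.le _)
    · exact hrpow_int.const_mul C
    · have hne : ∀ᵐ (τ : ℝ), τ ≠ t := by
        rw [ae_iff]
        have : {τ : ℝ | ¬τ ≠ t} = {t} := by ext τ; simp
        rw [this]
        exact Real.volume_singleton
      filter_upwards [ae_restrict_of_ae hne, ae_restrict_mem measurableSet_Ioo]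
        with τ hτne hτ
      rcases lt_or_gt_of_ne hτne with hlt | hgt
      · have hev : (fun x => G (x - τ) * τ ^ (-α)) =ᶠ[𝓝 t] fun x => H x τ := by
          filter_upwards [Ioi_mem_nhds hlt] with x hx
          simp only [hH]
          exact (Set.indicator_of_mem (show τ ∈ Ioo 0 x from ⟨hτ.1, hx⟩)
            (fun τ' => G (x - τ') * τ' ^ (-α))).symm
        have hc : ContinuousAt (fun x => G (x - τ) * τ ^ (-α)) t := by
          have hGat : ContinuousAt G (t - τ) :=
            hGc.continuousAt (isOpen_Ioi.mem_nhds (by simp only [mem_Ioi]; linarith))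
          have hsub : ContinuousAt (fun x : ℝ => x - τ) t :=
            continuousAt_id.sub continuousAt_const
          exact (ContinuousAt.comp (g := G) (f := fun x : ℝ => x - τ) hGat hsub).mul
            continuousAt_const
        exact hc.congr hev
      · have hev : (fun _ : ℝ => (0:ℝ)) =ᶠ[𝓝 t] fun x => H x τ := by
          filter_upwards [Iio_mem_nhds hgt] with x hx
          simp only [hH]
          exact (Set.indicator_of_notMem
            (fun hmem => absurd hmem.2 (not_lt.mpr hx.le))
            (fun τ' => G (x - τ') * τ' ^ (-α))).symm
        exact continuousAt_const.congr hev
  have hev2 : (fun x => ∫ τ in Ioo 0 R, H x τ) =ᶠ[𝓝 t]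
      fun u => ∫ s in Ioo 0 u, G s * (u - s) ^ (-α) := by
    filter_upwards [Ioo_mem_nhds ht htR] with x hx
    rw [F_reflect α G x]
    simp only [hH]
    rw [setIntegral_indicator measurableSet_Ioo,
      inter_eq_self_of_subset_right (Ioo_subset_Ioo_right hx.2.le)]
  exact hcont.congr hev2


lemma parts_one (hα0 : 0 < α) (hα1 : α < 1) (w G : ℝ → ℝ)
    (hw : Continuous w) (hw0 : w 0 = 0) (hG : Measurable G)
    (hGb : ∀ T > 0, ∃ C, 0 ≤ C ∧ ∀ x ∈ Ioc 0 T, |G x| ≤ C)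
    (hd : ∀ x > 0, HasDerivAt w (G x) x) {r : ℝ} (hr : 0 < r) :
    ∫ τ in Ioo 0 r, G τ * (r - τ) ^ (1 - α)
      = (1 - α) * ∫ τ in Ioo 0 r, w τ * (r - τ) ^ (-α) := by
  obtain ⟨C, hC0, hC⟩ := hGb r hr
  obtain ⟨W, hW⟩ := (isCompact_Icc (a := (0:ℝ)) (b := r)).exists_bound_of_continuousOn
    hw.continuousOn
  set φ : ℝ → ℝ := fun τ => w τ * (r - τ) ^ (1 - α) with hφ
  set ψ : ℝ → ℝ := fun τ => G τ * (r - τ) ^ (1 - α) - (1 - α) * (w τ * (r - τ) ^ (-α)) with hψ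
  have hintA : IntegrableOn (fun τ => G τ * (r - τ) ^ (1 - α)) (Ioo 0 r) :=
    integrableOn_mul_rpow hr.le (by linarith) hG.aestronglyMeasurable
      (fun s hs => hC s ⟨hs.1, hs.2.le⟩)
  have hintB : IntegrableOn (fun τ => w τ * (r - τ) ^ (-α)) (Ioo 0 r) :=
    integrableOn_mul_rpow hr.le (by linarith : (-1:ℝ) < -α)
      hw.aestronglyMeasurable.restrict
      (fun s hs => by
        have := hW s ⟨hs.1.le, hs.2.le⟩
        rwa [Real.norm_eq_abs] at this)
  have hcont : ContinuousOn φ (Icc 0 r) :=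
    (hw.mul ((Real.continuous_rpow_const (by linarith)).comp
      (continuous_const.sub continuous_id))).continuousOn
  have hderiv : ∀ x ∈ Ioo 0 r, HasDerivWithinAt φ (ψ x) (Ioi x) x := by
    intro x hx
    have hrx : (0:ℝ) < r - x := by linarith [hx.2]
    have h1 : HasDerivAt (fun τ : ℝ => (r - τ) ^ (1 - α))
        (-((1 - α) * (r - x) ^ (-α))) x := by
      have h2 := (Real.hasDerivAt_rpow_const (x := r - x) (p := 1 - α)
        (Or.inl hrx.ne')).comp x ((hasDerivAt_id x).const_sub r)
      refine h2.congr_deriv ?_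
      rw [show (1:ℝ) - α - 1 = -α by ring]
      ring
    have h3 := (hd x hx.1).mul h1
    have h4 : HasDerivAt φ (ψ x) x := by
      refine h3.congr_deriv ?_
      simp only [hψ]
      ring
    exact h4.hasDerivWithinAt
  have hint : IntervalIntegrable ψ volume 0 r := by
    rw [intervalIntegrable_iff_integrableOn_Ioo_of_le hr.le]
    exact hintA.sub (hintB.const_mul (1 - α))
  have hFTC := intervalIntegral.integral_eq_sub_of_hasDeriv_right_of_le hr.le hcont hderiv hint
  have hφr : φ r = 0 := by
    simp only [hφ, sub_self, Real.zero_rpow (by linarith : (1:ℝ) - α ≠ 0), mul_zero]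
  have hφ0 : φ 0 = 0 := by simp only [hφ, hw0, zero_mul]
  rw [hφr, hφ0, sub_zero, intervalIntegral.integral_of_le hr.le,
    integral_Ioc_eq_integral_Ioo] at hFTC
  have hsplit : ∫ τ in Ioo 0 r, ψ τ
      = (∫ τ in Ioo 0 r, G τ * (r - τ) ^ (1 - α))
        - (1 - α) * ∫ τ in Ioo 0 r, w τ * (r - τ) ^ (-α) := by
    rw [hψ]
    rw [integral_sub hintA (hintB.const_mul (1 - α)), integral_const_mul]
  rw [hsplit] at hFTC
  linarith


lemma fubini_step (hα0 : 0 < α) (hα1 : α < 1) (G : ℝ → ℝ) (hG : Measurable G)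
    (hGb : ∀ T > 0, ∃ C, 0 ≤ C ∧ ∀ x ∈ Ioc 0 T, |G x| ≤ C) {r : ℝ} (hr : 0 < r) :
    ∫ u in Ioo 0 r, (∫ s in Ioo 0 u, G s * (u - s) ^ (-α))
      = ∫ s in Ioo 0 r, G s * ((r - s) ^ (1 - α) / (1 - α)) := by
  obtain ⟨C, hC0, hC⟩ := hGb r hr
  set Φ : ℝ × ℝ → ℝ :=
    fun p => ({q : ℝ × ℝ | 0 < q.2 ∧ q.2 < q.1}).indicator
      (fun q => G q.2 * (q.1 - q.2) ^ (-α)) p with hΦ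
  have hset : MeasurableSet {q : ℝ × ℝ | 0 < q.2 ∧ q.2 < q.1} :=
    (measurableSet_lt measurable_const measurable_snd).inter
      (measurableSet_lt measurable_snd measurable_fst)
  have hΦm : Measurable Φ :=
    (((hG.comp measurable_snd).mul
      ((measurable_fst.sub measurable_snd).pow_const (-α))).indicator hset)
  have hslice : ∀ u s : ℝ, Φ (u, s)
      = (Ioo 0 u).indicator (fun s => G s * (u - s) ^ (-α)) s := by
    intro u s
    simp only [hΦ, indicator_apply, mem_setOf_eq, mem_Ioo]
  have hslice' : ∀ s : ℝ, 0 < s → ∀ u : ℝ, Φ (u, s)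
      = (Ioi s).indicator (fun u => G s * (u - s) ^ (-α)) u := by
    intro s hs u
    simp only [hΦ, indicator_apply, mem_setOf_eq, mem_Ioi, hs, true_and]
  have hint_left : ∀ u : ℝ, 0 < u → u ≤ r →
      Integrable (fun s => Φ (u, s)) (volume.restrict (Ioo 0 r)) := by
    intro u hu hur
    have : (fun s => Φ (u, s)) = (Ioo 0 u).indicator (fun s => G s * (u - s) ^ (-α)) :=
      funext fun s => hslice u s
    rw [this, integrable_indicator_iff measurableSet_Ioo]
    show Integrable _ ((volume.restrict (Ioo 0 r)).restrict (Ioo 0 u))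
    rw [Measure.restrict_restrict measurableSet_Ioo,
      inter_eq_self_of_subset_left (Ioo_subset_Ioo_right hur)]
    exact integrableOn_mul_rpow hu.le (by linarith) hG.aestronglyMeasurable
      (fun s hs => hC s ⟨hs.1, hs.2.le.trans hur⟩)
  have hnormbd : ∀ u ∈ Ioo (0:ℝ) r,
      (∫ s in Ioo 0 r, ‖Φ (u, s)‖) ≤ C * (r ^ (1 - α) / (1 - α)) := by
    intro u hu
    have e1 : (fun s => ‖Φ (u, s)‖)
        = (Ioo 0 u).indicator (fun s => ‖G s * (u - s) ^ (-α)‖) := by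
      funext s
      rw [hslice u s, norm_indicator_eq_indicator_norm]
    rw [show (∫ s in Ioo 0 r, ‖Φ (u, s)‖)
        = ∫ s in Ioo 0 r, (Ioo 0 u).indicator (fun s => ‖G s * (u - s) ^ (-α)‖) s from
        by rw [← e1]]
    rw [setIntegral_indicator measurableSet_Ioo,
      inter_eq_self_of_subset_right (Ioo_subset_Ioo_right hu.2.le)]
    have hIb : IntegrableOn (fun s => C * (u - s) ^ (-α)) (Ioo 0 u) :=
      (integrableOn_rpow_sub_s15 (by linarith) hu.1.le).const_mul C
    have hIa : IntegrableOn (fun s => ‖G s * (u - s) ^ (-α)‖) (Ioo 0 u) := by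
      apply Integrable.norm
      exact integrableOn_mul_rpow hu.1.le (by linarith) hG.aestronglyMeasurable
        (fun s hs => hC s ⟨hs.1, hs.2.le.trans hu.2.le⟩)
    have h2 : ∫ s in Ioo 0 u, ‖G s * (u - s) ^ (-α)‖
        ≤ ∫ s in Ioo 0 u, C * (u - s) ^ (-α) := by
      apply setIntegral_mono_on hIa hIb measurableSet_Ioo
      intro s hs
      have hnn : (0:ℝ) ≤ (u - s) ^ (-α) := rpow_nonneg (by linarith [hs.2]) _
      rw [norm_mul, Real.norm_eq_abs, Real.norm_eq_abs, abs_of_nonneg hnn]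
      exact mul_le_mul_of_nonneg_right (hC s ⟨hs.1, hs.2.le.trans hu.2.le⟩) hnn
    refine h2.trans ?_
    rw [integral_const_mul, integral_rpow_sub (by linarith : (-1:ℝ) < -α) hu.1.le]
    rw [show -α + 1 = 1 - α by ring, sub_zero]
    have hmono : u ^ (1 - α) ≤ r ^ (1 - α) :=
      rpow_le_rpow hu.1.le hu.2.le (by linarith)
    have h1a : (0:ℝ) < 1 - α := by linarith
    apply mul_le_mul_of_nonneg_left _ hC0
    exact (div_le_div_iff_of_pos_right h1a).mpr hmono
  have hprod : Integrable Φ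
      ((volume.restrict (Ioo (0:ℝ) r)).prod (volume.restrict (Ioo (0:ℝ) r))) := by
    refine (integrable_prod_iff hΦm.aestronglyMeasurable).mpr ⟨?_, ?_⟩
    · filter_upwards [ae_restrict_mem measurableSet_Ioo] with u hu
      exact hint_left u hu.1 hu.2.le
    · refine Integrable.mono' (g := fun _ => C * (r ^ (1 - α) / (1 - α)))
        (integrable_const _) (hΦm.aestronglyMeasurable.norm.integral_prod_right') ?_
      filter_upwards [ae_restrict_mem measurableSet_Ioo] with u hu
      have hnn : 0 ≤ ∫ s in Ioo (0:ℝ) r, ‖Φ (u, s)‖ :=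
        integral_nonneg (fun s => norm_nonneg _)
      rw [Real.norm_eq_abs, abs_of_nonneg hnn]
      exact hnormbd u hu
  have hswap := integral_integral_swap (f := fun u s => Φ (u, s))
    (μ := volume.restrict (Ioo (0:ℝ) r)) (ν := volume.restrict (Ioo (0:ℝ) r)) hprod
  have hL : (∫ u in Ioo (0:ℝ) r, (∫ s in Ioo (0:ℝ) r, Φ (u, s)))
      = ∫ u in Ioo 0 r, (∫ s in Ioo 0 u, G s * (u - s) ^ (-α)) := by
    apply setIntegral_congr_fun measurableSet_Ioo
    intro u hu
    simp only [hslice u]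
    rw [setIntegral_indicator measurableSet_Ioo,
      inter_eq_self_of_subset_right (Ioo_subset_Ioo_right hu.2.le)]
  have hR : (∫ s in Ioo (0:ℝ) r, (∫ u in Ioo (0:ℝ) r, Φ (u, s)))
      = ∫ s in Ioo 0 r, G s * ((r - s) ^ (1 - α) / (1 - α)) := by
    apply setIntegral_congr_fun measurableSet_Ioo
    intro s hs
    simp only [hslice' s hs.1]
    rw [setIntegral_indicator measurableSet_Ioi]
    have hinter : Ioo (0:ℝ) r ∩ Ioi s = Ioo s r := by
      ext x
      simp only [mem_inter_iff, mem_Ioo, mem_Ioi]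
      constructor
      · rintro ⟨⟨_, h2⟩, h3⟩; exact ⟨h3, h2⟩
      · rintro ⟨h1, h2⟩; exact ⟨⟨hs.1.trans h1, h2⟩, h1⟩
    rw [hinter, integral_const_mul, integral_rpow_sub' (by linarith : (-1:ℝ) < -α) hs.2.le,
      show -α + 1 = 1 - α by ring]
  rw [hL, hR] at hswap
  exact hswap

theorem hasDerivAt_frac (hα0 : 0 < α) (hα1 : α < 1) (w G : ℝ → ℝ)
    (hw : Continuous w) (hw0 : w 0 = 0) (hG : Measurable G)
    (hGc : ContinuousOn G (Ioi 0))
    (hGb : ∀ T > 0, ∃ C, 0 ≤ C ∧ ∀ x ∈ Ioc 0 T, |G x| ≤ C)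
    (hd : ∀ x > 0, HasDerivAt w (G x) x) {t : ℝ} (ht : 0 < t) :
    HasDerivAt (fun r => ∫ τ in Ioo 0 r, w τ * (r - τ) ^ (-α))
      (∫ τ in Ioo 0 t, G τ * (t - τ) ^ (-α)) t := by
  set F : ℝ → ℝ := fun u => ∫ s in Ioo 0 u, G s * (u - s) ^ (-α) with hF
  have hFc : ∀ u ∈ Ioi (0:ℝ), ContinuousAt F u :=
    fun u hu => F_contAt hα0 hα1 G hG hGc hGb hu
  have hFcont : ContinuousOn F (Ioi 0) := fun u hu => (hFc u hu).continuousWithinAt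
  have hFbd : ∀ b > (0:ℝ), ∃ M, ∀ u ∈ Ioc (0:ℝ) b, ‖F u‖ ≤ M := by
    intro b hb
    obtain ⟨C, hC0, hC⟩ := hGb b hb
    refine ⟨C * (b ^ (1 - α) / (1 - α)), fun u hu => ?_⟩
    have hInt : IntegrableOn (fun s => C * (u - s) ^ (-α)) (Ioo 0 u) :=
      (integrableOn_rpow_sub_s15 (by linarith) hu.1.le).const_mul C
    have h1 : ‖F u‖ ≤ ∫ s in Ioo 0 u, C * (u - s) ^ (-α) := by
      apply norm_integral_le_of_norm_le hInt
      filter_upwards [ae_restrict_mem measurableSet_Ioo] with s hs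
      have h2 : (0:ℝ) ≤ (u - s) ^ (-α) := rpow_nonneg (by linarith [hs.2]) _
      rw [norm_mul, Real.norm_eq_abs, Real.norm_eq_abs, abs_of_nonneg h2]
      exact mul_le_mul_of_nonneg_right (hC s ⟨hs.1, hs.2.le.trans hu.2⟩) h2
    rw [integral_const_mul, integral_rpow_sub (by linarith : (-1:ℝ) < -α) hu.1.le,
      show -α + 1 = 1 - α by ring, sub_zero] at h1
    refine h1.trans ?_
    have hmono : u ^ (1 - α) ≤ b ^ (1 - α) :=
      rpow_le_rpow hu.1.le hu.2 (by linarith)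
    apply mul_le_mul_of_nonneg_left _ hC0
    exact (div_le_div_iff_of_pos_right (by linarith)).mpr hmono
  have hFii : ∀ b > (0:ℝ), IntervalIntegrable F volume 0 b := by
    intro b hb
    obtain ⟨M, hM⟩ := hFbd b hb
    rw [intervalIntegrable_iff_integrableOn_Ioo_of_le hb.le]
    exact integrableOn_of_bdd
      ((hFcont.mono (Ioo_subset_Ioi_self)).aestronglyMeasurable measurableSet_Ioo)
      (fun s hs => hM s ⟨hs.1, hs.2.le⟩)
  have hkey : ∀ r ∈ Ioi (0:ℝ),
      (∫ τ in Ioo 0 r, w τ * (r - τ) ^ (-α)) = ∫ u in (0:ℝ)..r, F u := by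
    intro r hr
    rw [intervalIntegral.integral_of_le (le_of_lt hr), integral_Ioc_eq_integral_Ioo]
    have h1 := parts_one hα0 hα1 w G hw hw0 hG hGb hd hr
    have h2 := fubini_step hα0 hα1 G hG hGb hr
    rw [hF]
    rw [h2]
    have h3 : ∫ s in Ioo 0 r, G s * ((r - s) ^ (1 - α) / (1 - α))
        = (∫ s in Ioo 0 r, G s * (r - s) ^ (1 - α)) / (1 - α) := by
      rw [← integral_div]
      congr 1
      funext s
      ring
    rw [h3, h1]
    exact (mul_div_cancel_left₀ _ (by linarith : (1:ℝ) - α ≠ 0)).symm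
  have hΨ : HasDerivAt (fun r => ∫ u in (0:ℝ)..r, F u) (F t) t :=
    intervalIntegral.integral_hasDerivAt_right (hFii t ht)
      ⟨Ioi 0, Ioi_mem_nhds ht, hFcont.aestronglyMeasurable measurableSet_Ioi⟩
      (hFc t ht)
  have hee : (fun r => ∫ u in (0:ℝ)..r, F u)
      =ᶠ[nhds t] (fun r => ∫ τ in Ioo 0 r, w τ * (r - τ) ^ (-α)) := by
    filter_upwards [Ioi_mem_nhds ht] with r hr
    exact (hkey r hr).symm
  exact hΨ.congr_of_eventuallyEq hee.symm

lemma parts_two (hα0 : 0 < α) (hα1 : α < 1) (w G : ℝ → ℝ)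
    (hw : Continuous w) (hw0 : w 0 = 0) (hG : Measurable G)
    (hGb : ∀ T > 0, ∃ C, 0 ≤ C ∧ ∀ x ∈ Ioc 0 T, |G x| ≤ C)
    (hd : ∀ x > 0, HasDerivAt w (G x) x) {t : ℝ} (ht : 0 < t) :
    α * ∫ τ in Ioo 0 t, (w τ - w t) ^ 2 * (t - τ) ^ (-α - 1)
      = -((w t) ^ 2 * t ^ (-α))
        - ∫ τ in Ioo 0 t, (2 * (w τ - w t) * G τ) * (t - τ) ^ (-α) := by
  obtain ⟨C, hC0, hC⟩ := hGb t ht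
  obtain ⟨W, hW⟩ := (isCompact_Icc (a := (0:ℝ)) (b := t)).exists_bound_of_continuousOn
    hw.continuousOn
  have hW0 : 0 ≤ W := le_trans (norm_nonneg _) (hW 0 ⟨le_refl 0, ht.le⟩)
  -- Lipschitz-type bound
  have hLip : ∀ τ, 0 < τ → τ ≤ t → |w t - w τ| ≤ C * (t - τ) := by
    intro τ hτ hτt
    have hs : ∀ x ∈ Icc τ t, HasDerivWithinAt w (G x) (Icc τ t) x :=
      fun x hx => (hd x (lt_of_lt_of_le hτ hx.1)).hasDerivWithinAt
    have hb : ∀ x ∈ Icc τ t, ‖G x‖ ≤ C := fun x hx => by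
      rw [Real.norm_eq_abs]; exact hC x ⟨lt_of_lt_of_le hτ hx.1, hx.2⟩
    have h := (convex_Icc τ t).norm_image_sub_le_of_norm_hasDerivWithin_le hs hb
      (left_mem_Icc.mpr hτt) (right_mem_Icc.mpr hτt)
    rwa [Real.norm_eq_abs, Real.norm_eq_abs, abs_of_nonneg (by linarith : (0:ℝ) ≤ t - τ)] at h
  have hsq : ∀ τ, 0 < τ → τ ≤ t → (w τ - w t) ^ 2 ≤ C ^ 2 * (t - τ) ^ 2 := by
    intro τ hτ hτt
    have h1 : |w τ - w t| ≤ C * (t - τ) := by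
      rw [abs_sub_comm]; exact hLip τ hτ hτt
    calc (w τ - w t) ^ 2 = |w τ - w t| ^ 2 := (sq_abs _).symm
      _ ≤ (C * (t - τ)) ^ 2 := by
          apply pow_le_pow_left₀ (abs_nonneg _) h1
      _ = C ^ 2 * (t - τ) ^ 2 := by ring
  set φ : ℝ → ℝ := fun τ => (w τ - w t) ^ 2 * (t - τ) ^ (-α) with hφ
  set ψ : ℝ → ℝ := fun τ => (2 * (w τ - w t) * G τ) * (t - τ) ^ (-α)
      + α * ((w τ - w t) ^ 2 * (t - τ) ^ (-α - 1)) with hψ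
  have hφt : φ t = 0 := by simp [hφ]
  -- continuity of φ on [0, t]
  have hcont : ContinuousOn φ (Icc 0 t) := by
    intro x hx
    rcases lt_or_eq_of_le hx.2 with hxt | hxt
    · apply ContinuousAt.continuousWithinAt
      have hrp : ContinuousAt (fun τ : ℝ => (t - τ) ^ (-α)) x := by
        have h1 : ContinuousAt (fun y : ℝ => y ^ (-α)) (t - x) :=
          Real.continuousAt_rpow_const _ _ (Or.inl (by linarith : t - x ≠ 0))
        have h2 : ContinuousAt (fun τ : ℝ => t - τ) x :=
          continuousAt_const.sub continuousAt_id
        exact ContinuousAt.comp (g := fun y : ℝ => y ^ (-α)) h1 h2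
      exact (((hw.continuousAt).sub continuousAt_const).pow 2).mul hrp
    · rw [hxt]
      unfold ContinuousWithinAt
      rw [hφt]
      apply squeeze_zero' (g := fun τ => C ^ 2 * (t - τ) ^ (2 - α))
      · filter_upwards [self_mem_nhdsWithin] with τ hτ
        exact mul_nonneg (sq_nonneg _) (rpow_nonneg (by linarith [hτ.2] : (0:ℝ) ≤ t - τ) _)
      · filter_upwards [self_mem_nhdsWithin,
          mem_nhdsWithin_of_mem_nhds (Ioi_mem_nhds ht)] with τ hτ hτ0
        rcases lt_or_eq_of_le hτ.2 with hlt | heq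
        · have h1 : (0:ℝ) < t - τ := by linarith
          have h2 : φ τ ≤ C ^ 2 * (t - τ) ^ 2 * (t - τ) ^ (-α) := by
            simp only [hφ]
            exact mul_le_mul_of_nonneg_right (hsq τ hτ0 hτ.2) (rpow_nonneg h1.le _)
          refine h2.trans_eq ?_
          rw [mul_assoc, ← Real.rpow_natCast (t - τ) 2, ← Real.rpow_add h1,
            show ((2:ℕ):ℝ) + -α = 2 - α by push_cast; ring]
        · simp only [hφ, heq, sub_self]
          rw [Real.zero_rpow (by linarith : -α ≠ 0),
            Real.zero_rpow (by linarith : 2 - α ≠ 0)]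
          simp
      · have hc : Continuous (fun τ : ℝ => C ^ 2 * (t - τ) ^ (2 - α)) := by
          apply continuous_const.mul
          exact (Real.continuous_rpow_const (by linarith)).comp
            (continuous_const.sub continuous_id)
        have := hc.tendsto t
        rw [show C ^ 2 * (t - t) ^ (2 - α) = 0 by
          rw [sub_self, Real.zero_rpow (by linarith : 2 - α ≠ 0), mul_zero]] at this
        exact this.mono_left nhdsWithin_le_nhds
  -- derivative of φ on (0, t)
  have hderiv : ∀ x ∈ Ioo 0 t, HasDerivWithinAt φ (ψ x) (Ioi x) x := by
    intro x hx
    have hrx : (0:ℝ) < t - x := by linarith [hx.2]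
    have h1 : HasDerivAt (fun τ : ℝ => (t - τ) ^ (-α)) (α * (t - x) ^ (-α - 1)) x := by
      have h2 := (Real.hasDerivAt_rpow_const (x := t - x) (p := -α)
        (Or.inl hrx.ne')).comp x ((hasDerivAt_id x).const_sub t)
      refine h2.congr_deriv ?_
      ring
    have h3 : HasDerivAt (fun τ : ℝ => (w τ - w t) ^ 2) (2 * (w x - w t) * G x) x := by
      have h4 := ((hd x hx.1).sub_const (w t)).pow 2
      refine h4.congr_deriv ?_
      ring
    have h5 := h3.mul h1
    have h6 : HasDerivAt φ (ψ x) x := by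
      refine h5.congr_deriv ?_
      simp only [hψ]
      ring
    exact h6.hasDerivWithinAt
  -- integrability of the two pieces
  have hmw : AEStronglyMeasurable (fun τ => 2 * (w τ - w t) * G τ)
      (volume.restrict (Ioo 0 t)) :=
    ((((hw.measurable.sub measurable_const).const_mul 2).mul hG)).aestronglyMeasurable
  have hI1 : IntegrableOn (fun τ => (2 * (w τ - w t) * G τ) * (t - τ) ^ (-α)) (Ioo 0 t) := by
    apply integrableOn_mul_rpow ht.le (by linarith : (-1:ℝ) < -α) hmw
    intro s hs
    have h1 : |w s - w t| ≤ 2 * W := by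
      have h2 := hW s ⟨hs.1.le, hs.2.le⟩
      have h3 := hW t ⟨ht.le, le_refl t⟩
      rw [Real.norm_eq_abs] at h2 h3
      calc |w s - w t| ≤ |w s| + |w t| := abs_sub _ _
        _ ≤ 2 * W := by linarith
    calc |2 * (w s - w t) * G s| = 2 * |w s - w t| * |G s| := by
          rw [abs_mul, abs_mul]; norm_num
      _ ≤ 2 * (2 * W) * C := by
          apply mul_le_mul _ (hC s ⟨hs.1, hs.2.le⟩) (abs_nonneg _)
            (by positivity)
          exact mul_le_mul_of_nonneg_left h1 (by norm_num)
      _ = 4 * W * C := by ring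
  have hI2 : IntegrableOn (fun τ => (w τ - w t) ^ 2 * (t - τ) ^ (-α - 1)) (Ioo 0 t) := by
    apply integrableOn_of_bdd (C := C ^ 2 * t ^ (1 - α))
    · exact (((hw.measurable.sub measurable_const).pow_const 2).mul
        ((measurable_const.sub measurable_id).pow_const (-α - 1))).aestronglyMeasurable
    · intro s hs
      have h1 : (0:ℝ) < t - s := by linarith [hs.2]
      have h2 : (0:ℝ) ≤ (t - s) ^ (-α - 1) := rpow_nonneg h1.le _
      rw [Real.norm_eq_abs, abs_mul, abs_of_nonneg h2, abs_of_nonneg (sq_nonneg _)]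
      calc (w s - w t) ^ 2 * (t - s) ^ (-α - 1)
          ≤ C ^ 2 * (t - s) ^ 2 * (t - s) ^ (-α - 1) :=
            mul_le_mul_of_nonneg_right (hsq s hs.1 hs.2.le) h2
        _ = C ^ 2 * (t - s) ^ (1 - α) := by
            rw [mul_assoc, ← Real.rpow_natCast (t - s) 2, ← Real.rpow_add h1,
              show ((2:ℕ):ℝ) + (-α - 1) = 1 - α by push_cast; ring]
        _ ≤ C ^ 2 * t ^ (1 - α) := by
            apply mul_le_mul_of_nonneg_left _ (sq_nonneg C)
            exact rpow_le_rpow h1.le (by linarith [hs.1]) (by linarith)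
  have hint : IntervalIntegrable ψ volume 0 t := by
    rw [intervalIntegrable_iff_integrableOn_Ioo_of_le ht.le]
    exact hI1.add (hI2.const_mul α)
  have hFTC := intervalIntegral.integral_eq_sub_of_hasDeriv_right_of_le ht.le hcont hderiv hint
  have hφ0 : φ 0 = (w t) ^ 2 * t ^ (-α) := by
    simp only [hφ]
    rw [hw0, sub_zero]
    ring
  rw [hφt, hφ0, zero_sub, intervalIntegral.integral_of_le ht.le,
    integral_Ioc_eq_integral_Ioo] at hFTC
  have hsplit : ∫ τ in Ioo 0 t, ψ τ
      = (∫ τ in Ioo 0 t, (2 * (w τ - w t) * G τ) * (t - τ) ^ (-α))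
        + α * ∫ τ in Ioo 0 t, (w τ - w t) ^ 2 * (t - τ) ^ (-α - 1) := by
    simp only [hψ]
    rw [integral_add hI1 (hI2.const_mul α), integral_const_mul]
  rw [hsplit] at hFTC
  linarith

/-- the chain-rule identity
`(1/2) d/dt ∫₀^t v²(τ)(t-τ)^{-α} dτ + v²(t)/(2t^α)
   + (α/2) ∫₀^t (v(τ)-v(t))²(t-τ)^{-α-1} dτ = v(t) d/dt ∫₀^t v(τ)(t-τ)^{-α} dτ`
for `v` continuously differentiable on `[0,∞)` with `v(0) = 0`; both fractional
integrals are differentiable at every `t > 0`. -/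
theorem stmt_15 (α : ℝ) (hα : α ∈ Set.Ioo (0:ℝ) 1)
    (v : ℝ → ℝ) (hv : ContDiffOn ℝ 1 v (Set.Ici 0)) (hv0 : v 0 = 0) :
    ∀ t > (0:ℝ),
      DifferentiableAt ℝ (fun r => ∫ τ in Set.Ioo (0:ℝ) r, (v τ) ^ 2 * (r - τ) ^ (-α)) t ∧
      DifferentiableAt ℝ (fun r => ∫ τ in Set.Ioo (0:ℝ) r, v τ * (r - τ) ^ (-α)) t ∧
      (1 / 2) * deriv (fun r => ∫ τ in Set.Ioo (0:ℝ) r, (v τ) ^ 2 * (r - τ) ^ (-α)) t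
          + (v t) ^ 2 / (2 * t ^ α)
          + (α / 2) * ∫ τ in Set.Ioo (0:ℝ) t, (v τ - v t) ^ 2 * (t - τ) ^ (-α - 1)
        = v t * deriv (fun r => ∫ τ in Set.Ioo (0:ℝ) r, v τ * (r - τ) ^ (-α)) t := by
  obtain ⟨hα0, hα1⟩ := hα
  intro t ht
  set u : ℝ → ℝ := fun x => v |x| with hudef
  have hu_eq : ∀ x : ℝ, 0 ≤ x → v x = u x := fun x hx => by
    simp only [hudef, abs_of_nonneg hx]
  have hucont : Continuous u :=
    hv.continuousOn.comp_continuous continuous_abs (fun x => abs_nonneg x)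
  have hu0 : u 0 = 0 := by simp only [hudef, abs_zero, hv0]
  set G : ℝ → ℝ := deriv u with hGdef
  have hGm : Measurable G := measurable_deriv u
  have huv : ∀ x : ℝ, 0 < x → u =ᶠ[nhds x] v := by
    intro x hx
    filter_upwards [Ioi_mem_nhds hx] with y hy
    simp only [hudef, abs_of_nonneg (le_of_lt (mem_Ioi.mp hy))]
  have hvd : ∀ x > (0:ℝ), HasDerivAt u (G x) x := by
    intro x hx
    have h1 : ContDiffAt ℝ 1 v x := hv.contDiffAt (Ici_mem_nhds hx)
    have h2 : DifferentiableAt ℝ v x := h1.differentiableAt one_ne_zero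
    have h3 : DifferentiableAt ℝ u x := h2.congr_of_eventuallyEq (huv x hx)
    exact h3.hasDerivAt
  set dv : ℝ → ℝ := derivWithin v (Ici 0) with hdvdef
  have hdvc : ContinuousOn dv (Ici 0) :=
    hv.continuousOn_derivWithin (uniqueDiffOn_Ici 0) le_rfl
  have hGdv : ∀ x : ℝ, 0 < x → G x = dv x := by
    intro x hx
    rw [hGdef, hdvdef, derivWithin_of_mem_nhds (Ici_mem_nhds hx)]
    exact (huv x hx).deriv_eq
  have hGc : ContinuousOn G (Ioi 0) :=
    (hdvc.mono (Ioi_subset_Ici_self)).congr (fun x hx => hGdv x hx)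
  have hGb : ∀ T > (0:ℝ), ∃ C, 0 ≤ C ∧ ∀ x ∈ Ioc 0 T, |G x| ≤ C := by
    intro T hT
    obtain ⟨C, hC⟩ := (isCompact_Icc (a := (0:ℝ)) (b := T)).exists_bound_of_continuousOn
      (hdvc.mono (Icc_subset_Ici_self))
    refine ⟨C, le_trans (norm_nonneg _) (hC 0 ⟨le_refl 0, hT.le⟩), fun x hx => ?_⟩
    rw [← Real.norm_eq_abs, hGdv x hx.1]
    exact hC x ⟨hx.1.le, hx.2⟩
  set w2 : ℝ → ℝ := fun x => (u x) ^ 2 with hw2def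
  set G2 : ℝ → ℝ := fun x => 2 * u x * G x with hG2def
  have hw2c : Continuous w2 := hucont.pow 2
  have hw20 : w2 0 = 0 := by simp only [hw2def, hu0]; norm_num
  have hG2m : Measurable G2 := (hucont.measurable.const_mul 2).mul hGm
  have hG2c : ContinuousOn G2 (Ioi 0) :=
    ((continuous_const.mul hucont).continuousOn.mul hGc)
  have hG2b : ∀ T > (0:ℝ), ∃ C, 0 ≤ C ∧ ∀ x ∈ Ioc 0 T, |G2 x| ≤ C := by
    intro T hT
    obtain ⟨C, hC0, hC⟩ := hGb T hT
    obtain ⟨W, hW⟩ := (isCompact_Icc (a := (0:ℝ)) (b := T)).exists_bound_of_continuousOn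
      hucont.continuousOn
    have hW0 : 0 ≤ W := le_trans (norm_nonneg _) (hW 0 ⟨le_refl 0, hT.le⟩)
    refine ⟨2 * W * C, by positivity, fun x hx => ?_⟩
    have h1 : |u x| ≤ W := by
      rw [← Real.norm_eq_abs]; exact hW x ⟨hx.1.le, hx.2⟩
    calc |G2 x| = 2 * |u x| * |G x| := by
          rw [hG2def]; rw [abs_mul, abs_mul]; norm_num
      _ ≤ 2 * W * C := by
          apply mul_le_mul _ (hC x hx) (abs_nonneg _) (by positivity)
          exact mul_le_mul_of_nonneg_left h1 (by norm_num)
  have hd2 : ∀ x > (0:ℝ), HasDerivAt w2 (G2 x) x := by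
    intro x hx
    have h1 := (hvd x hx).pow 2
    have h2 : HasDerivAt w2 (G2 x) x := by
      refine h1.congr_deriv ?_
      simp only [hG2def]
      push_cast
      ring
    exact h2
  -- rewrite integrals from v to u
  have e2 : (fun r => ∫ τ in Ioo (0:ℝ) r, (v τ) ^ 2 * (r - τ) ^ (-α))
      = (fun r => ∫ τ in Ioo (0:ℝ) r, w2 τ * (r - τ) ^ (-α)) := by
    funext r
    apply setIntegral_congr_fun measurableSet_Ioo
    intro τ hτ
    simp only [hw2def]
    rw [hu_eq τ hτ.1.le]
  have e1 : (fun r => ∫ τ in Ioo (0:ℝ) r, v τ * (r - τ) ^ (-α))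
      = (fun r => ∫ τ in Ioo (0:ℝ) r, u τ * (r - τ) ^ (-α)) := by
    funext r
    apply setIntegral_congr_fun measurableSet_Ioo
    intro τ hτ
    show v τ * (r - τ) ^ (-α) = u τ * (r - τ) ^ (-α)
    rw [hu_eq τ hτ.1.le]
  have evt : v t = u t := hu_eq t ht.le
  have eJ : (∫ τ in Ioo (0:ℝ) t, (v τ - v t) ^ 2 * (t - τ) ^ (-α - 1))
      = ∫ τ in Ioo (0:ℝ) t, (u τ - u t) ^ 2 * (t - τ) ^ (-α - 1) := by
    apply setIntegral_congr_fun measurableSet_Ioo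
    intro τ hτ
    show (v τ - v t) ^ 2 * (t - τ) ^ (-α - 1) = (u τ - u t) ^ 2 * (t - τ) ^ (-α - 1)
    rw [hu_eq τ hτ.1.le, evt]
  have hA1 := hasDerivAt_frac hα0 hα1 u G hucont hu0 hGm hGc hGb hvd ht
  have hA2 := hasDerivAt_frac hα0 hα1 w2 G2 hw2c hw20 hG2m hG2c hG2b hd2 ht
  have hB := parts_two hα0 hα1 u G hucont hu0 hGm hGb hvd ht
  refine ⟨?_, ?_, ?_⟩
  · rw [e2]; exact hA2.differentiableAt
  · rw [e1]; exact hA1.differentiableAt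
  · rw [e1, e2, eJ, evt, hA1.deriv, hA2.deriv]
    -- integrability facts for splitting
    obtain ⟨C, hC0, hC⟩ := hGb t ht
    obtain ⟨C2, hC20, hC2⟩ := hG2b t ht
    have h1 : IntegrableOn (fun τ => G2 τ * (t - τ) ^ (-α)) (Ioo 0 t) :=
      integrableOn_mul_rpow ht.le (by linarith) hG2m.aestronglyMeasurable
        (fun s hs => hC2 s ⟨hs.1, hs.2.le⟩)
    have h2 : IntegrableOn (fun τ => (2 * u t * G τ) * (t - τ) ^ (-α)) (Ioo 0 t) := by
      apply integrableOn_mul_rpow ht.le (by linarith)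
        ((measurable_const.mul hGm)).aestronglyMeasurable
      intro s hs
      calc |2 * u t * G s| = |2 * u t| * |G s| := abs_mul _ _
        _ ≤ |2 * u t| * C := mul_le_mul_of_nonneg_left (hC s ⟨hs.1, hs.2.le⟩) (abs_nonneg _)
    have hsplit2 : (∫ τ in Ioo (0:ℝ) t, (2 * (u τ - u t) * G τ) * (t - τ) ^ (-α))
        = (∫ τ in Ioo (0:ℝ) t, G2 τ * (t - τ) ^ (-α))
          - 2 * u t * ∫ τ in Ioo (0:ℝ) t, G τ * (t - τ) ^ (-α) := by
      rw [show (fun τ => (2 * (u τ - u t) * G τ) * (t - τ) ^ (-α))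
          = fun τ => G2 τ * (t - τ) ^ (-α) - (2 * u t * G τ) * (t - τ) ^ (-α) from
          funext fun τ => by simp only [hG2def]; ring]
      rw [integral_sub h1 h2]
      congr 1
      rw [show (fun τ => (2 * u t * G τ) * (t - τ) ^ (-α))
          = fun τ => (2 * u t) * (G τ * (t - τ) ^ (-α)) from funext fun τ => by ring]
      exact integral_const_mul _ _
    rw [hsplit2] at hB
    rw [show (α / 2) * (∫ τ in Ioo (0:ℝ) t, (u τ - u t) ^ 2 * (t - τ) ^ (-α - 1))
        = (α * ∫ τ in Ioo (0:ℝ) t, (u τ - u t) ^ 2 * (t - τ) ^ (-α - 1)) / 2 by ring, hB]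
    rw [Real.rpow_neg ht.le]
    have htα : (t:ℝ) ^ α ≠ 0 := ne_of_gt (Real.rpow_pos_of_pos ht _)
    field_simp
    ring
end
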